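/- arXiv:1605.01551 — 2 statements merged into one kernel-verified Lean document; each statement's English description precedes it below -/
import Mathlib

section
/- Assume (A3) and (A6). The unique solution (f₋, f₊) of Luckock's equation satisfies λ₊(I₊) − f₋(I₋)·λ₊(I₋) = λ₋(I₋) − f₊(I₊)·λ₋(I₊). -/
open MeasureTheory Set
open scoped ENNReal

noncomputable section

/-- The right limit of `f` at `x`, with the convention `f(b+) := f b` at the
right endpoint `b`. -/
def rLim (b : ℝ) (f : ℝ → ℝ) (x : ℝ) : ℝ :=
  if x < b then Function.rightLim f x else f b

/-- `ν` is the Lebesgue-Stieltjes signed measure `df` of `f` on the interval `[a,b]`,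
with the conventions `f(a−) := f a` and `f(b+) := f b`. -/
def IsLS (a b : ℝ) (f : ℝ → ℝ) (ν : MeasureTheory.SignedMeasure ℝ) : Prop :=
  (∀ s : Set ℝ, MeasurableSet s → s ∩ Set.Icc a b = ∅ → ν s = 0) ∧
  (∀ x y : ℝ, a ≤ x → x ≤ y → y ≤ b → ν (Set.Ioc x y) = rLim b f y - rLim b f x) ∧
  ν {a} = rLim b f a - f a

/-- The integral `∫_s g dν` of `g` over `s` against the signed measure `ν`. -/
def sInt (ν : MeasureTheory.SignedMeasure ℝ) (g : ℝ → ℝ) (s : Set ℝ) : ℝ :=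
  (∫ x in s, g x ∂ν.toJordanDecomposition.posPart) -
    ∫ x in s, g x ∂ν.toJordanDecomposition.negPart

/-- Assumption (A3): `lm` (demand) is continuous and nonincreasing, `lp` (supply) is
continuous and nondecreasing on `[a,b]`; both are nonnegative. -/
def A3 (a b : ℝ) (lm lp : ℝ → ℝ) : Prop :=
  ContinuousOn lm (Set.Icc a b) ∧ ContinuousOn lp (Set.Icc a b) ∧
  AntitoneOn lm (Set.Icc a b) ∧ MonotoneOn lp (Set.Icc a b) ∧
  (∀ x ∈ Set.Icc a b, 0 ≤ lm x) ∧ (∀ x ∈ Set.Icc a b, 0 ≤ lp x)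

/-- Assumption (A6): the rates of market orders are positive. -/
def A6 (a b : ℝ) (lm lp : ℝ → ℝ) : Prop := 0 < lp a ∧ 0 < lm b

/-- `(fm, fp)` is a solution of Luckock's equation on `[a,b]` for demand/supply `lm, lp`:
both are continuous of bounded variation, `fm dlp + lm dfp = 0` and `fp dlm + lp dfm = 0`
as signed measures on `[a,b]`, and `fm b = 1 = fp a`. -/
def LuckockSol (a b : ℝ) (lm lp fm fp : ℝ → ℝ) : Prop :=
  ContinuousOn fm (Set.Icc a b) ∧ ContinuousOn fp (Set.Icc a b) ∧
  BoundedVariationOn fm (Set.Icc a b) ∧ BoundedVariationOn fp (Set.Icc a b) ∧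
  fm b = 1 ∧ fp a = 1 ∧
  ∀ νlm νlp νfm νfp : MeasureTheory.SignedMeasure ℝ,
    IsLS a b lm νlm → IsLS a b lp νlp → IsLS a b fm νfm → IsLS a b fp νfp →
    ∀ s : Set ℝ, MeasurableSet s →
      sInt νlp fm s + sInt νfp lm s = 0 ∧ sInt νlm fp s + sInt νfm lp s = 0

namespace LuckockAux

open Filter Function
open scoped Topology

variable {a b : ℝ}

def cl (a b x : ℝ) : ℝ := max a (min x b)

lemma cl_mono : Monotone (cl a b) := fun _ _ h =>
  max_le_max le_rfl (min_le_min h le_rfl)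

lemma cl_cont : Continuous (cl a b) :=
  continuous_const.max (continuous_id.min continuous_const)

lemma cl_mem (hab : a ≤ b) (x : ℝ) : cl a b x ∈ Icc a b :=
  ⟨le_max_left _ _, max_le hab (min_le_right _ _)⟩

lemma cl_eq {x : ℝ} (hx : x ∈ Icc a b) : cl a b x = x := by
  unfold cl; rw [min_eq_left hx.2, max_eq_right hx.1]

lemma cl_eq_left (hab : a ≤ b) {x : ℝ} (hx : x ≤ a) : cl a b x = a := by
  unfold cl; rw [min_eq_left (hx.trans hab), max_eq_left hx]

lemma cl_eq_right (hab : a ≤ b) {x : ℝ} (hx : b ≤ x) : cl a b x = b := by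
  unfold cl; rw [min_eq_right hx, max_eq_right hab]

lemma rightLim_eq_const {g : ℝ → ℝ} {c x z : ℝ} (hxz : x < z)
    (hc : ∀ y ∈ Ioo x z, g y = c) : Function.rightLim g x = c := by
  refine rightLim_eq_of_tendsto ?_
  refine Tendsto.congr' ?_ tendsto_const_nhds
  filter_upwards [Ioo_mem_nhdsGT_of_mem ⟨le_rfl, hxz⟩] with y hy
  exact (hc y hy).symm

lemma rightLim_eq_const' {g : ℝ → ℝ} {c x t : ℝ} (hxt : t ≤ x)
    (hc : ∀ y, t < y → g y = c) : Function.rightLim g x = c := by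
  refine rightLim_eq_of_tendsto ?_
  refine Tendsto.congr' ?_ tendsto_const_nhds
  filter_upwards [self_mem_nhdsWithin] with y hy
  exact (hc y (lt_of_le_of_lt hxt hy)).symm

lemma leftLim_eq_const {g : ℝ → ℝ} {c x : ℝ} (hc : ∀ y, y < x → g y = c) :
    Function.leftLim g x = c := by
  refine leftLim_eq_of_tendsto ?_
  refine Tendsto.congr' ?_ tendsto_const_nhds
  filter_upwards [self_mem_nhdsWithin] with y hy
  exact (hc y hy).symm

def ofCM (F : ℝ → ℝ) (hm : Monotone F) (hc : Continuous F) : StieltjesFunction ℝ :=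
  ⟨F, hm, fun _ => hc.continuousAt.continuousWithinAt⟩

@[simp] lemma ofCM_apply (F : ℝ → ℝ) (hm : Monotone F) (hc : Continuous F) (x : ℝ) :
    ofCM F hm hc x = F x := rfl

lemma tendsto_atBot_of_left {G : ℝ → ℝ} {c : ℝ} (hG : ∀ x, x < a → G x = c) :
    Tendsto G atBot (𝓝 c) := by
  refine Tendsto.congr' ?_ tendsto_const_nhds
  filter_upwards [eventually_lt_atBot a] with x hx
  exact (hG x hx).symm

lemma tendsto_atTop_of_right {G : ℝ → ℝ} {d : ℝ} (hG : ∀ x, b ≤ x → G x = d) :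
    Tendsto G atTop (𝓝 d) := by
  refine Tendsto.congr' ?_ tendsto_const_nhds
  filter_upwards [eventually_ge_atTop b] with x hx
  exact (hG x hx).symm

lemma isFinite_of_const (G : StieltjesFunction ℝ) {c d : ℝ} (hga : ∀ x, x < a → G x = c)
    (hgb : ∀ x, b ≤ x → G x = d) : IsFiniteMeasure G.measure :=
  ⟨by rw [G.measure_univ (tendsto_atBot_of_left hga) (tendsto_atTop_of_right hgb)]
      exact ENNReal.ofReal_lt_top⟩

lemma measure_Iio_eq_zero (G : StieltjesFunction ℝ) {c : ℝ} (hG : ∀ x, x < a → G x = c) :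
    G.measure (Iio a) = 0 := by
  have hb : Tendsto G atBot (𝓝 c) := tendsto_atBot_of_left hG
  have key : ∀ n : ℕ, G.measure (Iic (a - ((n : ℝ) + 1)⁻¹)) = 0 := by
    intro n
    rw [G.measure_Iic hb, hG _ (sub_lt_self a (by positivity))]
    simp
  have hsub : Iio a ⊆ ⋃ n : ℕ, Iic (a - ((n : ℝ) + 1)⁻¹) := by
    intro x hx
    obtain ⟨n, hn⟩ := exists_nat_one_div_lt (show (0:ℝ) < a - x from sub_pos.2 hx)
    rw [one_div] at hn
    exact mem_iUnion.2 ⟨n, by simp only [mem_Iic]; linarith⟩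
  refine le_antisymm ((measure_mono hsub).trans ((measure_iUnion_le _).trans ?_)) (zero_le)
  simp [key]

lemma measure_Ioi_eq_zero (G : StieltjesFunction ℝ) {c d : ℝ} (hGa : ∀ x, x < a → G x = c)
    (hGb : ∀ x, b ≤ x → G x = d) : G.measure (Ioi b) = 0 := by
  have h1 : Tendsto G atBot (𝓝 c) := tendsto_atBot_of_left hGa
  have h2 : Tendsto G atTop (𝓝 d) := tendsto_atTop_of_right hGb
  have hu : G.measure univ = ENNReal.ofReal (d - c) := G.measure_univ h1 h2
  have hic : G.measure (Iic b) = ENNReal.ofReal (d - c) := by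
    rw [G.measure_Iic h1, hGb b le_rfl]
  have hcompl := measure_compl (measurableSet_Iic : MeasurableSet (Iic b))
    (by rw [hic]; exact ENNReal.ofReal_ne_top)
  rw [compl_Iic] at hcompl
  rw [hcompl, hu, hic, tsub_self]

lemma int_mono (hab : a ≤ b) (μ : Measure ℝ) [IsFiniteMeasure μ] {g : ℝ → ℝ}
    (hg : Monotone g) : IntegrableOn g (Ioc a b) μ := by
  refine Integrable.mono' (integrable_const (max |g a| |g b|))
    hg.measurable.aestronglyMeasurable ?_
  filter_upwards [ae_restrict_mem measurableSet_Ioc] with x hx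
  rw [Real.norm_eq_abs]
  exact abs_le_max_abs_abs (hg hx.1.le) (hg hx.2)

lemma ibp (hab : a ≤ b) (F G : StieltjesFunction ℝ)
    [IsFiniteMeasure F.measure] [IsFiniteMeasure G.measure]
    (hF : Continuous F) :
    (∫ x in Ioc a b, G x ∂F.measure) + (∫ x in Ioc a b, F x ∂G.measure)
      = F b * G b - F a * G a := by
  have hFl : ∀ y : ℝ, Function.leftLim F y = F y := fun y =>
    leftLim_eq_of_tendsto
      ((hF.tendsto y).mono_left nhdsWithin_le_nhds)
  set T : Set (ℝ × ℝ) := (Ioc a b ×ˢ Ioc a b) ∩ {p | p.2 ≤ p.1} with hT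
  set U : Set (ℝ × ℝ) := (Ioc a b ×ˢ Ioc a b) ∩ {p | p.1 < p.2} with hU
  have hTm : MeasurableSet T := (measurableSet_Ioc.prod measurableSet_Ioc).inter
      (measurableSet_le measurable_snd measurable_fst)
  have hUm : MeasurableSet U := (measurableSet_Ioc.prod measurableSet_Ioc).inter
      (measurableSet_lt measurable_fst measurable_snd)
  have hdisj : Disjoint T U := by
    rw [Set.disjoint_left]
    rintro ⟨x, y⟩ ⟨_, (h1 : y ≤ x)⟩ ⟨_, (h2 : x < y)⟩
    exact absurd h1 (not_le.2 h2)
  have hunion : T ∪ U = Ioc a b ×ˢ Ioc a b := by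
    ext ⟨x, y⟩
    constructor
    · rintro (⟨h, _⟩ | ⟨h, _⟩) <;> exact h
    · intro h
      rcases le_or_gt y x with h' | h'
      · exact Or.inl ⟨h, h'⟩
      · exact Or.inr ⟨h, h'⟩
  have hTval : F.measure.prod G.measure T
      = ∫⁻ x in Ioc a b, ENNReal.ofReal (G x - G a) ∂F.measure := by
    calc F.measure.prod G.measure T = ∫⁻ x, G.measure (Prod.mk x ⁻¹' T) ∂F.measure :=
          Measure.prod_apply hTm
    _ = ∫⁻ x, (Ioc a b).indicator (fun x => ENNReal.ofReal (G x - G a)) x ∂F.measure := by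
        refine lintegral_congr fun x => ?_
        by_cases hx : x ∈ Ioc a b
        · have hpre : Prod.mk x ⁻¹' T = Ioc a x := by
            ext y
            simp only [hT, mem_preimage, mem_inter_iff, mem_prod, mem_setOf_eq, mem_Ioc]
            constructor
            · rintro ⟨⟨_, hy⟩, h2⟩; exact ⟨hy.1, h2⟩
            · rintro ⟨h1, h2⟩; exact ⟨⟨hx, h1, h2.trans hx.2⟩, h2⟩
          rw [hpre, G.measure_Ioc, indicator_of_mem hx]
        · have hpre : Prod.mk x ⁻¹' T = ∅ := by
            ext y
            simp only [hT, mem_preimage, mem_inter_iff, mem_prod, mem_setOf_eq,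
              mem_empty_iff_false, iff_false, not_and]
            rintro ⟨hx', _⟩
            exact absurd hx' hx
          rw [hpre, measure_empty, indicator_of_notMem hx]
    _ = _ := lintegral_indicator measurableSet_Ioc _
  have hUval : F.measure.prod G.measure U
      = ∫⁻ y in Ioc a b, ENNReal.ofReal (F y - F a) ∂G.measure := by
    calc F.measure.prod G.measure U = ∫⁻ y, F.measure ((fun x => (x, y)) ⁻¹' U) ∂G.measure :=
          Measure.prod_apply_symm hUm
    _ = ∫⁻ y, (Ioc a b).indicator (fun y => ENNReal.ofReal (F y - F a)) y ∂G.measure := by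
        refine lintegral_congr fun y => ?_
        by_cases hy : y ∈ Ioc a b
        · have hpre : (fun x => (x, y)) ⁻¹' U = Ioo a y := by
            ext x
            simp only [hU, mem_preimage, mem_inter_iff, mem_prod, mem_setOf_eq, mem_Ioc, mem_Ioo]
            constructor
            · rintro ⟨⟨hx, _⟩, h2⟩; exact ⟨hx.1, h2⟩
            · rintro ⟨h1, h2⟩; exact ⟨⟨⟨h1, (h2.trans_le hy.2).le⟩, hy⟩, h2⟩
          rw [hpre, StieltjesFunction.measure_Ioo, hFl y, indicator_of_mem hy]
        · have hpre : (fun x => (x, y)) ⁻¹' U = ∅ := by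
            ext x
            simp only [hU, mem_preimage, mem_inter_iff, mem_prod, mem_setOf_eq,
              mem_empty_iff_false, iff_false, not_and]
            rintro ⟨_, hy'⟩
            exact absurd hy' hy
          rw [hpre, measure_empty, indicator_of_notMem hy]
    _ = _ := lintegral_indicator measurableSet_Ioc _
  have hsq : F.measure.prod G.measure (Ioc a b ×ˢ Ioc a b)
      = ENNReal.ofReal (F b - F a) * ENNReal.ofReal (G b - G a) := by
    rw [Measure.prod_prod, F.measure_Ioc, G.measure_Ioc]
  have key : (∫⁻ x in Ioc a b, ENNReal.ofReal (G x - G a) ∂F.measure)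
      + (∫⁻ y in Ioc a b, ENNReal.ofReal (F y - F a) ∂G.measure)
      = ENNReal.ofReal (F b - F a) * ENNReal.ofReal (G b - G a) := by
    rw [← hTval, ← hUval, ← measure_union hdisj hUm, hunion, hsq]
  have hGint : IntegrableOn (fun x => G x) (Ioc a b) F.measure := int_mono hab _ G.mono
  have hFint : IntegrableOn (fun x => F x) (Ioc a b) G.measure := int_mono hab _ F.mono
  have hint1 : Integrable (fun x => G x - G a) (F.measure.restrict (Ioc a b)) :=
    hGint.sub (integrable_const _)
  have hint2 : Integrable (fun x => F x - F a) (G.measure.restrict (Ioc a b)) :=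
    hFint.sub (integrable_const _)
  have hnn1 : 0 ≤ᵐ[F.measure.restrict (Ioc a b)] fun x => G x - G a := by
    filter_upwards [ae_restrict_mem measurableSet_Ioc] with x hx
    exact sub_nonneg.2 (G.mono hx.1.le)
  have hnn2 : 0 ≤ᵐ[G.measure.restrict (Ioc a b)] fun x => F x - F a := by
    filter_upwards [ae_restrict_mem measurableSet_Ioc] with x hx
    exact sub_nonneg.2 (F.mono hx.1.le)
  have e1 : (∫⁻ x in Ioc a b, ENNReal.ofReal (G x - G a) ∂F.measure)
      = ENNReal.ofReal (∫ x in Ioc a b, (G x - G a) ∂F.measure) :=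
    (ofReal_integral_eq_lintegral_ofReal hint1 hnn1).symm
  have e2 : (∫⁻ y in Ioc a b, ENNReal.ofReal (F y - F a) ∂G.measure)
      = ENNReal.ofReal (∫ y in Ioc a b, (F y - F a) ∂G.measure) :=
    (ofReal_integral_eq_lintegral_ofReal hint2 hnn2).symm
  have p1 : 0 ≤ ∫ x in Ioc a b, (G x - G a) ∂F.measure := integral_nonneg_of_ae hnn1
  have p2 : 0 ≤ ∫ y in Ioc a b, (F y - F a) ∂G.measure := integral_nonneg_of_ae hnn2
  rw [e1, e2] at key
  have h3 := congrArg ENNReal.toReal key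
  rw [ENNReal.toReal_add ENNReal.ofReal_ne_top ENNReal.ofReal_ne_top, ENNReal.toReal_mul,
    ENNReal.toReal_ofReal p1, ENNReal.toReal_ofReal p2,
    ENNReal.toReal_ofReal (sub_nonneg.2 (F.mono hab)),
    ENNReal.toReal_ofReal (sub_nonneg.2 (G.mono hab))] at h3
  have hμF : (F.measure (Ioc a b)).toReal = F b - F a := by
    rw [F.measure_Ioc, ENNReal.toReal_ofReal (sub_nonneg.2 (F.mono hab))]
  have hμG : (G.measure (Ioc a b)).toReal = G b - G a := by
    rw [G.measure_Ioc, ENNReal.toReal_ofReal (sub_nonneg.2 (G.mono hab))]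
  have e1' : ∫ x in Ioc a b, (G x - G a) ∂F.measure
      = (∫ x in Ioc a b, G x ∂F.measure) - (F b - F a) * G a := by
    rw [integral_sub hGint (integrable_const _), setIntegral_const, smul_eq_mul, measureReal_def, hμF]
  have e2' : ∫ y in Ioc a b, (F y - F a) ∂G.measure
      = (∫ y in Ioc a b, F y ∂G.measure) - (G b - G a) * F a := by
    rw [integral_sub hFint (integrable_const _), setIntegral_const, smul_eq_mul, measureReal_def, hμG]
  rw [e1', e2'] at h3
  linear_combination h3

lemma rLim_eq {f : ℝ → ℝ} (hf : ContinuousOn f (Icc a b)) {y : ℝ}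
    (hy : y ∈ Icc a b) : rLim b f y = f y := by
  unfold rLim
  split_ifs with h
  · refine rightLim_eq_of_tendsto ?_
    refine (hf y hy).mono_left ?_
    refine nhdsWithin_le_iff.2 ?_
    exact mem_of_superset (Ioo_mem_nhdsGT_of_mem ⟨le_rfl, h⟩)
      (fun z hz => ⟨hy.1.trans hz.1.le, hz.2.le⟩)
  · rw [le_antisymm hy.2 (not_lt.1 h)]

lemma sInt_sub (a b : ℝ) (μ1 μ2 : Measure ℝ) [IsFiniteMeasure μ1] [IsFiniteMeasure μ2]
    (g G0 : ℝ → ℝ) (hG0 : Continuous G0) (C : ℝ) (hC : ∀ x, ‖G0 x‖ ≤ C)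
    (heq : EqOn g G0 (Ioc a b)) :
    sInt (μ1.toSignedMeasure - μ2.toSignedMeasure) g (Ioc a b)
      = (∫ x in Ioc a b, G0 x ∂μ1) - ∫ x in Ioc a b, G0 x ∂μ2 := by
  unfold sInt
  set ν := μ1.toSignedMeasure - μ2.toSignedMeasure with hν
  set pos := ν.toJordanDecomposition.posPart with hpos
  set neg := ν.toJordanDecomposition.negPart with hneg
  haveI : IsFiniteMeasure pos := ν.toJordanDecomposition.posPart_finite
  haveI : IsFiniteMeasure neg := ν.toJordanDecomposition.negPart_finite
  have hmeq : pos + μ2 = neg + μ1 := by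
    ext s hs
    have h1 : ν s = (μ1 s).toReal - (μ2 s).toReal := by
      rw [hν, VectorMeasure.sub_apply, Measure.toSignedMeasure_apply_measurable hs,
        Measure.toSignedMeasure_apply_measurable hs]
      rfl
    have h2 : ν s = (pos s).toReal - (neg s).toReal := by
      conv_lhs => rw [← ν.toSignedMeasure_toJordanDecomposition]
      rw [JordanDecomposition.toSignedMeasure, Measure.toSignedMeasure_sub_apply hs]
      rfl
    have h3 : (pos s).toReal + (μ2 s).toReal = (neg s).toReal + (μ1 s).toReal := by linarith
    have h4 : ((pos s) + (μ2 s)).toReal = ((neg s) + (μ1 s)).toReal := by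
      rw [ENNReal.toReal_add (measure_ne_top _ _) (measure_ne_top _ _),
        ENNReal.toReal_add (measure_ne_top _ _) (measure_ne_top _ _)]
      exact h3
    rw [Measure.add_apply, Measure.add_apply]
    exact (ENNReal.toReal_eq_toReal_iff'
      (ENNReal.add_ne_top.2 ⟨measure_ne_top _ _, measure_ne_top _ _⟩)
      (ENNReal.add_ne_top.2 ⟨measure_ne_top _ _, measure_ne_top _ _⟩)).1 h4
  have hint : ∀ (μ : Measure ℝ) [IsFiniteMeasure μ], Integrable G0 (μ.restrict (Ioc a b)) := by
    intro μ _
    exact (Integrable.mono' (integrable_const C) hG0.aestronglyMeasurable (ae_of_all _ hC)).restrict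
  have hsum : (∫ x in Ioc a b, G0 x ∂pos) + ∫ x in Ioc a b, G0 x ∂μ2
      = (∫ x in Ioc a b, G0 x ∂neg) + ∫ x in Ioc a b, G0 x ∂μ1 := by
    rw [← integral_add_measure (hint pos) (hint μ2), ← integral_add_measure (hint neg) (hint μ1),
      ← Measure.restrict_add, ← Measure.restrict_add, hmeq]
  rw [setIntegral_congr_fun measurableSet_Ioc heq, setIntegral_congr_fun measurableSet_Ioc heq]
  linarith

lemma isLS_mk (hab : a < b) (h : ℝ → ℝ) (hc : ContinuousOn h (Icc a b))
    (G1 G2 : StieltjesFunction ℝ) (c1 d1 c2 d2 : ℝ)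
    (h1a : ∀ x, x < a → G1 x = c1) (h1b : ∀ x, b ≤ x → G1 x = d1)
    (h2a : ∀ x, x < a → G2 x = c2) (h2b : ∀ x, b ≤ x → G2 x = d2)
    [IsFiniteMeasure G1.measure] [IsFiniteMeasure G2.measure]
    (hdiff : ∀ x, G1 x - G2 x = h (cl a b x)) :
    IsLS a b h (G1.measure.toSignedMeasure - G2.measure.toSignedMeasure) := by
  refine ⟨?_, ?_, ?_⟩
  · intro s hs hdis
    have hsub : s ⊆ Iio a ∪ Ioi b := by
      intro x hx
      rcases lt_or_ge x a with h1 | h1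
      · exact Or.inl h1
      rcases le_or_gt x b with h2 | h2
      · exfalso
        have hmem : x ∈ s ∩ Icc a b := ⟨hx, h1, h2⟩
        rw [hdis] at hmem
        exact absurd hmem (notMem_empty x)
      · exact Or.inr h2
    have z : ∀ (G : StieltjesFunction ℝ) (c d : ℝ), (∀ x, x < a → G x = c) →
        (∀ x, b ≤ x → G x = d) → G.measure s = 0 := fun G c d hga hgb =>
      measure_mono_null hsub
        (measure_union_null (measure_Iio_eq_zero G hga) (measure_Ioi_eq_zero G hga hgb))
    rw [VectorMeasure.sub_apply, Measure.toSignedMeasure_apply_measurable hs,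
      Measure.toSignedMeasure_apply_measurable hs, measureReal_def, measureReal_def, z G1 c1 d1 h1a h1b, z G2 c2 d2 h2a h2b]
    simp
  · intro x y hax hxy hyb
    have hx : x ∈ Icc a b := ⟨hax, hxy.trans hyb⟩
    have hy : y ∈ Icc a b := ⟨hax.trans hxy, hyb⟩
    rw [VectorMeasure.sub_apply, Measure.toSignedMeasure_apply_measurable measurableSet_Ioc,
      Measure.toSignedMeasure_apply_measurable measurableSet_Ioc, measureReal_def, measureReal_def,
      G1.measure_Ioc, G2.measure_Ioc,
      ENNReal.toReal_ofReal (sub_nonneg.2 (G1.mono hxy)),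
      ENNReal.toReal_ofReal (sub_nonneg.2 (G2.mono hxy)),
      rLim_eq hc hy, rLim_eq hc hx]
    have e1 := hdiff x; have e2 := hdiff y
    rw [cl_eq hx] at e1; rw [cl_eq hy] at e2
    linarith
  · have la1 : Function.leftLim (G1 : ℝ → ℝ) a = c1 := leftLim_eq_const fun y hy => h1a y hy
    have la2 : Function.leftLim (G2 : ℝ → ℝ) a = c2 := leftLim_eq_const fun y hy => h2a y hy
    have ha : a ∈ Icc a b := ⟨le_rfl, hab.le⟩
    have hda := hdiff a
    rw [cl_eq ha] at hda
    have hcc : c1 - c2 = h a := by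
      have hd1 := hdiff (a - 1)
      rw [h1a _ (by linarith), h2a _ (by linarith), cl_eq_left hab.le (by linarith)] at hd1
      exact hd1
    rw [VectorMeasure.sub_apply,
      Measure.toSignedMeasure_apply_measurable (measurableSet_singleton a),
      Measure.toSignedMeasure_apply_measurable (measurableSet_singleton a),
      measureReal_def, measureReal_def,
      G1.measure_singleton, G2.measure_singleton, la1, la2,
      ENNReal.toReal_ofReal (by rw [← la1]; exact sub_nonneg.2 (G1.mono.leftLim_le le_rfl)),
      ENNReal.toReal_ofReal (by rw [← la2]; exact sub_nonneg.2 (G2.mono.leftLim_le le_rfl)),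
      rLim_eq hc ha]
    linarith

lemma mono_parts (hab : a ≤ b) {f : ℝ → ℝ} (hf : ContinuousOn f (Icc a b))
    (hBV : BoundedVariationOn f (Icc a b)) :
    ∃ (P Q : StieltjesFunction ℝ) (cP dP cQ dQ : ℝ),
      (∀ x, P x - Q x = f (cl a b x)) ∧
      (∀ x, x < a → P x = cP) ∧ (∀ x, b ≤ x → P x = dP) ∧
      (∀ x, x < a → Q x = cQ) ∧ (∀ x, b ≤ x → Q x = dQ) := by
  have haI : a ∈ Icc a b := ⟨le_rfl, hab⟩
  have hfL := hBV.locallyBoundedVariationOn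
  set p : ℝ → ℝ := fun x => variationOnFromTo f (Icc a b) a (cl a b x) with hp
  set q : ℝ → ℝ := fun x => p x - f (cl a b x) with hq
  have hpm : Monotone p := fun x y h =>
    variationOnFromTo.monotoneOn hfL haI (cl_mem hab x) (cl_mem hab y) (cl_mono h)
  have hqm : Monotone q := fun x y h => by
    have h2 := variationOnFromTo.sub_self_monotoneOn hfL haI (cl_mem hab x) (cl_mem hab y)
      (cl_mono h)
    simpa [hq, hp] using h2
  have hFc : Continuous (fun x => f (cl a b x)) := hf.comp_continuous cl_cont (cl_mem hab)
  refine ⟨hpm.stieltjesFunction, hqm.stieltjesFunction, p a, p b, q a, q b, ?_, ?_, ?_, ?_, ?_⟩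
  · intro x
    have t1 := hpm.tendsto_rightLim x
    have t2 := hqm.tendsto_rightLim x
    have t3 : Tendsto (fun y => p y - q y) (𝓝[>] x)
        (𝓝 (Function.rightLim p x - Function.rightLim q x)) := t1.sub t2
    have hfun : (fun y => p y - q y) = fun y => f (cl a b y) := by
      funext y; simp [hq]
    rw [hfun] at t3
    have t4 : Tendsto (fun y => f (cl a b y)) (𝓝[>] x) (𝓝 (f (cl a b x))) :=
      (hFc.tendsto x).mono_left nhdsWithin_le_nhds
    have := tendsto_nhds_unique t3 t4
    rw [Monotone.stieltjesFunction_eq, Monotone.stieltjesFunction_eq]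
    exact this
  · intro x hx
    rw [Monotone.stieltjesFunction_eq]
    refine rightLim_eq_const hx fun y hy => ?_
    simp only [hp]
    rw [cl_eq_left hab hy.2.le, cl_eq_left hab le_rfl]
  · intro x hx
    rw [Monotone.stieltjesFunction_eq]
    refine rightLim_eq_const' hx fun y hy => ?_
    simp only [hp]
    rw [cl_eq_right hab hy.le, cl_eq_right hab le_rfl]
  · intro x hx
    rw [Monotone.stieltjesFunction_eq]
    refine rightLim_eq_const hx fun y hy => ?_
    simp only [hq, hp]
    rw [cl_eq_left hab hy.2.le, cl_eq_left hab le_rfl]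
  · intro x hx
    rw [Monotone.stieltjesFunction_eq]
    refine rightLim_eq_const' hx fun y hy => ?_
    simp only [hq, hp]
    rw [cl_eq_right hab hy.le, cl_eq_right hab le_rfl]

end LuckockAux

open LuckockAux Filter Function
open scoped Topology

/-- under (A3) and (A6), the unique solution `(fm, fp)` of Luckock's
equation satisfies `λ₊(I₊) − fm(I₋)·λ₊(I₋) = λ₋(I₋) − fp(I₊)·λ₋(I₊)`. -/
theorem stmt3 (a b : ℝ) (hab : a < b) (lm lp : ℝ → ℝ)
    (hA3 : A3 a b lm lp) (hA6 : A6 a b lm lp)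
    (fm fp : ℝ → ℝ) (hsol : LuckockSol a b lm lp fm fp) :
    lp b - fm a * lp a = lm a - fp b * lm b := by
  classical
  obtain ⟨hlmc, hlpc, hlma, hlpm, hlm0, hlp0⟩ := hA3
  obtain ⟨hfmc, hfpc, hfmBV, hfpBV, hfmb, hfpa, heqn⟩ := hsol
  have hab' : a ≤ b := hab.le
  have haI : a ∈ Set.Icc a b := ⟨le_rfl, hab'⟩
  have hbI : b ∈ Set.Icc a b := ⟨hab', le_rfl⟩
  -- clamped continuous monotone versions of the rate functions
  have hLpm : Monotone (fun x => lp (cl a b x)) := fun x y h =>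
    hlpm (cl_mem hab' x) (cl_mem hab' y) (cl_mono h)
  have hLpc : Continuous (fun x => lp (cl a b x)) :=
    hlpc.comp_continuous cl_cont (cl_mem hab')
  have hLmm : Monotone (fun x => -lm (cl a b x)) := fun x y h =>
    neg_le_neg (hlma (cl_mem hab' x) (cl_mem hab' y) (cl_mono h))
  have hLmc : Continuous (fun x => -lm (cl a b x)) :=
    (hlmc.comp_continuous cl_cont (cl_mem hab')).neg
  set SLp : StieltjesFunction ℝ := ofCM _ hLpm hLpc with hSLp
  set SLm : StieltjesFunction ℝ := ofCM _ hLmm hLmc with hSLm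
  set S0 : StieltjesFunction ℝ := ofCM (fun _ => (0:ℝ)) monotone_const continuous_const with hS0def
  have hSLpa : ∀ x, x < a → SLp x = lp a := fun x hx => by
    show lp (cl a b x) = lp a
    rw [cl_eq_left hab' hx.le]
  have hSLpb : ∀ x, b ≤ x → SLp x = lp b := fun x hx => by
    show lp (cl a b x) = lp b
    rw [cl_eq_right hab' hx]
  have hSLma : ∀ x, x < a → SLm x = -lm a := fun x hx => by
    show -lm (cl a b x) = -lm a
    rw [cl_eq_left hab' hx.le]
  have hSLmb : ∀ x, b ≤ x → SLm x = -lm b := fun x hx => by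
    show -lm (cl a b x) = -lm b
    rw [cl_eq_right hab' hx]
  have hS0a : ∀ x, x < a → S0 x = 0 := fun _ _ => rfl
  have hS0b : ∀ x, b ≤ x → S0 x = 0 := fun _ _ => rfl
  haveI : IsFiniteMeasure SLp.measure := isFinite_of_const SLp hSLpa hSLpb
  haveI : IsFiniteMeasure SLm.measure := isFinite_of_const SLm hSLma hSLmb
  haveI : IsFiniteMeasure S0.measure := isFinite_of_const S0 hS0a hS0b
  have hS0z : S0.measure = 0 := by
    apply Measure.measure_univ_eq_zero.1
    rw [S0.measure_univ (l := 0) (u := 0) tendsto_const_nhds tendsto_const_nhds]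
    simp
  -- monotone decompositions of fm, fp
  obtain ⟨Pm, Qm, cPm, dPm, cQm, dQm, hdm, hPma, hPmb, hQma, hQmb⟩ := mono_parts hab' hfmc hfmBV
  obtain ⟨Pp, Qp, cPp, dPp, cQp, dQp, hdp, hPpa, hPpb, hQpa, hQpb⟩ := mono_parts hab' hfpc hfpBV
  haveI : IsFiniteMeasure Pm.measure := isFinite_of_const Pm hPma hPmb
  haveI : IsFiniteMeasure Qm.measure := isFinite_of_const Qm hQma hQmb
  haveI : IsFiniteMeasure Pp.measure := isFinite_of_const Pp hPpa hPpb
  haveI : IsFiniteMeasure Qp.measure := isFinite_of_const Qp hQpa hQpb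
  -- the four Lebesgue--Stieltjes signed measures
  set νlp : MeasureTheory.SignedMeasure ℝ :=
    SLp.measure.toSignedMeasure - S0.measure.toSignedMeasure with hνlp
  set νlm : MeasureTheory.SignedMeasure ℝ :=
    S0.measure.toSignedMeasure - SLm.measure.toSignedMeasure with hνlm
  set νfm : MeasureTheory.SignedMeasure ℝ :=
    Pm.measure.toSignedMeasure - Qm.measure.toSignedMeasure with hνfm
  set νfp : MeasureTheory.SignedMeasure ℝ :=
    Pp.measure.toSignedMeasure - Qp.measure.toSignedMeasure with hνfp
  have hIlp : IsLS a b lp νlp :=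
    isLS_mk hab lp hlpc SLp S0 (lp a) (lp b) 0 0 hSLpa hSLpb hS0a hS0b
      (fun x => by show lp (cl a b x) - 0 = lp (cl a b x); ring)
  have hIlm : IsLS a b lm νlm :=
    isLS_mk hab lm hlmc S0 SLm 0 0 (-lm a) (-lm b) hS0a hS0b hSLma hSLmb
      (fun x => by show 0 - -lm (cl a b x) = lm (cl a b x); ring)
  have hIfm : IsLS a b fm νfm :=
    isLS_mk hab fm hfmc Pm Qm cPm dPm cQm dQm hPma hPmb hQma hQmb hdm
  have hIfp : IsLS a b fp νfp :=
    isLS_mk hab fp hfpc Pp Qp cPp dPp cQp dQp hPpa hPpb hQpa hQpb hdp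
  obtain ⟨E1, E2⟩ := heqn νlm νlp νfm νfp hIlm hIlp hIfm hIfp (Set.Ioc a b) measurableSet_Ioc
  -- bounds
  obtain ⟨Cfm, hCfm⟩ := isCompact_Icc.exists_bound_of_continuousOn hfmc
  obtain ⟨Cfp, hCfp⟩ := isCompact_Icc.exists_bound_of_continuousOn hfpc
  obtain ⟨Clp, hClp⟩ := isCompact_Icc.exists_bound_of_continuousOn hlpc
  obtain ⟨Clm, hClm⟩ := isCompact_Icc.exists_bound_of_continuousOn hlmc
  have hFmc : Continuous (fun x => fm (cl a b x)) := hfmc.comp_continuous cl_cont (cl_mem hab')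
  have hFpc : Continuous (fun x => fp (cl a b x)) := hfpc.comp_continuous cl_cont (cl_mem hab')
  have hLm0c : Continuous (fun x => lm (cl a b x)) := hlmc.comp_continuous cl_cont (cl_mem hab')
  -- rewrite the four sInt's
  have hs1 : sInt νlp fm (Set.Ioc a b)
      = (∫ x in Set.Ioc a b, fm (cl a b x) ∂SLp.measure)
        - ∫ x in Set.Ioc a b, fm (cl a b x) ∂S0.measure := by
    rw [hνlp]
    exact sInt_sub a b _ _ fm (fun x => fm (cl a b x)) hFmc Cfm
      (fun x => hCfm _ (cl_mem hab' x))
      (fun x hx => (congrArg fm (cl_eq ⟨hx.1.le, hx.2⟩)).symm)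
  have hs2 : sInt νfm lp (Set.Ioc a b)
      = (∫ x in Set.Ioc a b, lp (cl a b x) ∂Pm.measure)
        - ∫ x in Set.Ioc a b, lp (cl a b x) ∂Qm.measure := by
    rw [hνfm]
    exact sInt_sub a b _ _ lp (fun x => lp (cl a b x)) hLpc Clp
      (fun x => hClp _ (cl_mem hab' x))
      (fun x hx => (congrArg lp (cl_eq ⟨hx.1.le, hx.2⟩)).symm)
  have hs3 : sInt νlm fp (Set.Ioc a b)
      = (∫ x in Set.Ioc a b, fp (cl a b x) ∂S0.measure)
        - ∫ x in Set.Ioc a b, fp (cl a b x) ∂SLm.measure := by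
    rw [hνlm]
    exact sInt_sub a b _ _ fp (fun x => fp (cl a b x)) hFpc Cfp
      (fun x => hCfp _ (cl_mem hab' x))
      (fun x hx => (congrArg fp (cl_eq ⟨hx.1.le, hx.2⟩)).symm)
  have hs4 : sInt νfp lm (Set.Ioc a b)
      = (∫ x in Set.Ioc a b, lm (cl a b x) ∂Pp.measure)
        - ∫ x in Set.Ioc a b, lm (cl a b x) ∂Qp.measure := by
    rw [hνfp]
    exact sInt_sub a b _ _ lm (fun x => lm (cl a b x)) hLm0c Clm
      (fun x => hClm _ (cl_mem hab' x))
      (fun x hx => (congrArg lm (cl_eq ⟨hx.1.le, hx.2⟩)).symm)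
  -- integrals over the zero measure vanish
  have hzero : ∀ g : ℝ → ℝ, (∫ x in Set.Ioc a b, g x ∂S0.measure) = 0 := fun g => by
    rw [hS0z, Measure.restrict_zero, integral_zero_measure]
  -- split the integrands fm∘cl, fp∘cl into monotone parts
  have hsplit1 : (∫ x in Set.Ioc a b, fm (cl a b x) ∂SLp.measure)
      = (∫ x in Set.Ioc a b, Pm x ∂SLp.measure) - ∫ x in Set.Ioc a b, Qm x ∂SLp.measure := by
    rw [← integral_sub (int_mono hab' _ Pm.mono) (int_mono hab' _ Qm.mono)]
    exact setIntegral_congr_fun measurableSet_Ioc fun x _ => (hdm x).symm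
  have hsplit2 : (∫ x in Set.Ioc a b, fp (cl a b x) ∂SLm.measure)
      = (∫ x in Set.Ioc a b, Pp x ∂SLm.measure) - ∫ x in Set.Ioc a b, Qp x ∂SLm.measure := by
    rw [← integral_sub (int_mono hab' _ Pp.mono) (int_mono hab' _ Qp.mono)]
    exact setIntegral_congr_fun measurableSet_Ioc fun x _ => (hdp x).symm
  -- rewrite lp∘cl and lm∘cl as the Stieltjes functions SLp, -SLm
  have hlpS : ∀ μ : MeasureTheory.Measure ℝ,
      (∫ x in Set.Ioc a b, lp (cl a b x) ∂μ) = ∫ x in Set.Ioc a b, SLp x ∂μ := fun μ => rfl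
  have hlmS : ∀ μ : MeasureTheory.Measure ℝ,
      (∫ x in Set.Ioc a b, lm (cl a b x) ∂μ) = -∫ x in Set.Ioc a b, SLm x ∂μ := fun μ => by
    have hfun : (fun x => lm (cl a b x)) = fun x => -(SLm x) := by
      funext x
      show lm (cl a b x) = -(-lm (cl a b x))
      rw [neg_neg]
    rw [hfun, integral_neg]
  -- integration by parts
  have I1 := ibp hab' SLp Pm hLpc
  have I2 := ibp hab' SLp Qm hLpc
  have I3 := ibp hab' SLm Pp hLmc
  have I4 := ibp hab' SLm Qp hLmc
  -- endpoint values
  have vSLpa : SLp a = lp a := by show lp (cl a b a) = lp a; rw [cl_eq haI]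
  have vSLpb : SLp b = lp b := by show lp (cl a b b) = lp b; rw [cl_eq hbI]
  have vSLma : SLm a = -lm a := by show -lm (cl a b a) = -lm a; rw [cl_eq haI]
  have vSLmb : SLm b = -lm b := by show -lm (cl a b b) = -lm b; rw [cl_eq hbI]
  have hdma : Pm a - Qm a = fm a := by have := hdm a; rwa [cl_eq haI] at this
  have hdmb : Pm b - Qm b = fm b := by have := hdm b; rwa [cl_eq hbI] at this
  have hdpa : Pp a - Qp a = fp a := by have := hdp a; rwa [cl_eq haI] at this
  have hdpb : Pp b - Qp b = fp b := by have := hdp b; rwa [cl_eq hbI] at this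
  -- bridging products
  have m1 : SLp b * Pm b - SLp b * Qm b = lp b := by
    rw [vSLpb, ← mul_sub, hdmb, hfmb, mul_one]
  have m2 : SLp a * Pm a - SLp a * Qm a = lp a * fm a := by
    rw [vSLpa, ← mul_sub, hdma]
  have m3 : SLm b * Pp b - SLm b * Qp b = -(lm b * fp b) := by
    rw [vSLmb, ← mul_sub, hdpb]; ring
  have m4 : SLm a * Pp a - SLm a * Qp a = -(lm a) := by
    rw [vSLma, ← mul_sub, hdpa, hfpa]; ring
  -- assemble
  rw [hs1, hs4, hzero, hsplit1, sub_zero, hlmS, hlmS] at E1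
  rw [hs3, hs2, hzero, hsplit2, zero_sub, hlpS, hlpS] at E2
  linarith [E1, E2, I1, I2, I3, I4, m1, m2, m3, m4]
end
end

section
/- Assume (A3) and (A6). For each pair (g₋, g₊), with g₋ : Ī → ℝ bounded, left-continuous and of bounded variation and g₊ : Ī → ℝ bounded, right-continuous and of bounded variation, there exist a unique pair of bounded weight functions (w₋, w₊), with w₋ left-continuous of bounded variation, w₊ right-continuous of bounded variation, and w₋(I₋) = 0 = w₊(I₊), and a unique constant c ∈ ℝ, such that the associated linear functional F satisfies GF(X) = g₋(M₋(X)) + g₊(M₊(X)) − c for every configuration X. -/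
open MeasureTheory Set
open scoped ENNReal

noncomputable section

/-- The state of the order book: the multiset of buy limit order prices and the
multiset of sell limit order prices. -/
structure OrderBook where
  minus : Multiset ℝ
  plus : Multiset ℝ

/-- A valid configuration on the interval `(a,b)`: all orders have prices in `(a,b)`
and every buy order is strictly below every sell order. -/
def IsConfig (a b : ℝ) (X : OrderBook) : Prop :=
  (∀ x ∈ X.minus, x ∈ Set.Ioo a b) ∧ (∀ x ∈ X.plus, x ∈ Set.Ioo a b) ∧
  ∀ x ∈ X.minus, ∀ y ∈ X.plus, x < y

/-- The best (highest) buy offer, `a` if there are no buy limit orders. -/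
def Mminus (a : ℝ) (X : OrderBook) : ℝ := sSup (insert a {x | x ∈ X.minus})

/-- The best (lowest) sell offer, `b` if there are no sell limit orders. -/
def Mplus (b : ℝ) (X : OrderBook) : ℝ := sInf (insert b {x | x ∈ X.plus})

open scoped Classical in
/-- The Luckock map for a buy order at price level `u` (`u = b` is a buy market order). -/
def Lminus (a b u : ℝ) (X : OrderBook) : OrderBook :=
  if X.plus ≠ 0 ∧ Mplus b X ≤ u then ⟨X.minus, X.plus.erase (Mplus b X)⟩
  else if u ∈ Set.Ioo a b then ⟨u ::ₘ X.minus, X.plus⟩ else X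

open scoped Classical in
/-- The Luckock map for a sell order at price level `u` (`u = a` is a sell market order). -/
def Lplus (a b u : ℝ) (X : OrderBook) : OrderBook :=
  if X.minus ≠ 0 ∧ u ≤ Mminus a X then ⟨X.minus.erase (Mminus a X), X.plus⟩
  else if u ∈ Set.Ioo a b then ⟨X.minus, u ::ₘ X.plus⟩ else X

/-- The linear functional associated with the weight functions `wm, wp`. -/
def linF (wm wp : ℝ → ℝ) (X : OrderBook) : ℝ :=
  (X.minus.map wm).sum + (X.plus.map wp).sum

/-- The generator of the Stigler-Luckock model with arrival measures `μm, μp`. -/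
def genOp (a b : ℝ) (μm μp : MeasureTheory.Measure ℝ) (F : OrderBook → ℝ)
    (X : OrderBook) : ℝ :=
  (∫ u, (F (Lminus a b u X) - F X) ∂μm) + ∫ u, (F (Lplus a b u X) - F X) ∂μp

/-- `μm` is the arrival measure of buy orders: `μm [x, b] = lm x`, supported on `[a,b]`. -/
def IsMuMinus (a b : ℝ) (lm : ℝ → ℝ) (μm : MeasureTheory.Measure ℝ) : Prop :=
  (∀ x ∈ Set.Icc a b, μm (Set.Icc x b) = ENNReal.ofReal (lm x)) ∧
  μm (Set.Icc a b)ᶜ = 0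

/-- `μp` is the arrival measure of sell orders: `μp [a, x] = lp x`, supported on `[a,b]`. -/
def IsMuPlus (a b : ℝ) (lp : ℝ → ℝ) (μp : MeasureTheory.Measure ℝ) : Prop :=
  (∀ x ∈ Set.Icc a b, μp (Set.Icc a x) = ENNReal.ofReal (lp x)) ∧
  μp (Set.Icc a b)ᶜ = 0

/-- An admissible pair of weight functions: bounded, of bounded variation, `wm`
left-continuous, `wp` right-continuous, with `wm a = 0` and `wp b = 0`. -/
def WPair (a b : ℝ) (wm wp : ℝ → ℝ) : Prop :=
  (∃ C, ∀ x ∈ Set.Icc a b, |wm x| ≤ C) ∧ (∃ C, ∀ x ∈ Set.Icc a b, |wp x| ≤ C) ∧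
  BoundedVariationOn wm (Set.Icc a b) ∧ BoundedVariationOn wp (Set.Icc a b) ∧
  (∀ x ∈ Set.Ioc a b, ContinuousWithinAt wm (Set.Iio x) x) ∧
  (∀ x ∈ Set.Ico a b, ContinuousWithinAt wp (Set.Ioi x) x) ∧
  wm a = 0 ∧ wp b = 0

open Filter
open scoped Topology



namespace Stmt7Aux

/-- clamp to `[a,b]` -/
def clf (a b x : ℝ) : ℝ := max a (min b x)

lemma clf_mem {a b : ℝ} (hab : a ≤ b) (x : ℝ) : clf a b x ∈ Icc a b :=
  ⟨le_max_left _ _, max_le hab (min_le_left _ _)⟩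

lemma clf_of_mem {a b x : ℝ} (hx : x ∈ Icc a b) : clf a b x = x := by
  simp only [clf, min_eq_right hx.2, max_eq_right hx.1]

lemma clf_mono (a b : ℝ) : Monotone (clf a b) := fun x y h => by
  exact max_le_max le_rfl (min_le_min le_rfl h)

lemma clf_cont (a b : ℝ) : Continuous (clf a b) :=
  continuous_const.max (continuous_const.min continuous_id)

lemma monotoneOn_comp_clf {a b : ℝ} (hab : a ≤ b) {f : ℝ → ℝ}
    (hf : MonotoneOn f (Icc a b)) : Monotone (fun x => f (clf a b x)) :=
  fun x y h => hf (clf_mem hab x) (clf_mem hab y) (clf_mono a b h)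

/-- a bounded-variation function on `Icc a b` has a measurable companion agreeing on
`Icc a b`, with the same range of values on `Icc a b`. -/
lemma exists_measurable_companion {a b : ℝ} (hab : a ≤ b) {f : ℝ → ℝ}
    (hf : BoundedVariationOn f (Icc a b)) :
    ∃ F : ℝ → ℝ, Measurable F ∧ EqOn f F (Icc a b) ∧ ∀ x, ∃ y ∈ Icc a b, F x = f y := by
  obtain ⟨p, q, hp, hq, hpq⟩ :=
    LocallyBoundedVariationOn.exists_monotoneOn_sub_monotoneOn
      (fun x y hx hy => hf.mono inter_subset_left)
  refine ⟨fun x => f (clf a b x), ?_, ?_, ?_⟩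
  · have : (fun x => f (clf a b x)) =
        (fun x => p (clf a b x)) - (fun x => q (clf a b x)) := by
      funext x; simp [hpq]
    rw [this]
    exact ((monotoneOn_comp_clf hab hp).measurable.sub
      (monotoneOn_comp_clf hab hq).measurable)
  · intro x hx; show f x = f (clf a b x); rw [clf_of_mem hx]
  · intro x; exact ⟨clf a b x, clf_mem hab x, rfl⟩

lemma tendsto_of_dist_le {α : Type*} {f φ : α → ℝ} {l : Filter α} {c : ℝ}
    (h : ∀ᶠ y in l, dist (f y) c ≤ φ y) (hφ : Tendsto φ l (𝓝 0)) :
    Tendsto f l (𝓝 c) :=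
  tendsto_iff_dist_tendsto_zero.mpr
    (squeeze_zero' (Eventually.of_forall fun _ => dist_nonneg) h hφ)

lemma integrable_of_bound (μ : Measure ℝ) [IsFiniteMeasure μ] {w : ℝ → ℝ} {C : ℝ}
    (hw : Measurable w) (hb : ∀ x, |w x| ≤ C) : Integrable w μ :=
  (integrable_const C).mono' hw.aestronglyMeasurable
    (Eventually.of_forall fun x => by simpa using hb x)

lemma abs_setIntegral_le (μ : Measure ℝ) [IsFiniteMeasure μ] {w : ℝ → ℝ} {C : ℝ}
    (hw : Measurable w) (hb : ∀ x, |w x| ≤ C) (s : Set ℝ) :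
    |∫ x in s, w x ∂μ| ≤ C * (μ s).toReal := by
  have := norm_setIntegral_le_of_norm_le_const (μ := μ) (s := s) (f := w)
    (C := C) (measure_lt_top μ s) (fun x _ => by simpa using hb x)
  simpa [Measure.real] using this

end Stmt7Aux

namespace Stmt7Aux

lemma evar_add_le (f g : ℝ → ℝ) (s : Set ℝ) :
    eVariationOn (fun x => f x + g x) s ≤ eVariationOn f s + eVariationOn g s := by
  apply iSup_le
  rintro ⟨n, u, hu, us⟩
  calc (∑ i ∈ Finset.range n, edist (f (u (i+1)) + g (u (i+1))) (f (u i) + g (u i)))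
      ≤ ∑ i ∈ Finset.range n,
          (edist (f (u (i+1))) (f (u i)) + edist (g (u (i+1))) (g (u i))) :=
        Finset.sum_le_sum fun i _ => edist_add_add_le _ _ _ _
    _ = (∑ i ∈ Finset.range n, edist (f (u (i+1))) (f (u i)))
        + ∑ i ∈ Finset.range n, edist (g (u (i+1))) (g (u i)) := Finset.sum_add_distrib
    _ ≤ eVariationOn f s + eVariationOn g s :=
        add_le_add (eVariationOn.sum_le (f := f) (n := n) hu us) (eVariationOn.sum_le (f := g) (n := n) hu us)

lemma bvOn_add {f g : ℝ → ℝ} {s : Set ℝ} (hf : BoundedVariationOn f s)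
    (hg : BoundedVariationOn g s) : BoundedVariationOn (fun x => f x + g x) s :=
  ne_top_of_le_ne_top (by rw [Ne, ENNReal.add_eq_top]; exact not_or.mpr ⟨hf, hg⟩)
    (evar_add_le f g s)

lemma bvOn_neg {f : ℝ → ℝ} {s : Set ℝ} (hf : BoundedVariationOn f s) :
    BoundedVariationOn (fun x => -f x) s := by
  have : (fun x => -f x) = (fun y : ℝ => -y) ∘ f := rfl
  rw [this]
  exact LipschitzWith.comp_boundedVariationOn (LipschitzWith.id.neg) hf

lemma bvOn_const {c : ℝ} {s : Set ℝ} : BoundedVariationOn (fun _ => c) s := by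
  have : eVariationOn (fun _ : ℝ => c) s = 0 := by
    apply le_antisymm _ zero_le
    apply iSup_le
    rintro ⟨n, u, hu, us⟩
    simp
  simp [BoundedVariationOn, this]

lemma evar_mul_le {f g : ℝ → ℝ} {s : Set ℝ} {C D : ℝ}
    (hCf : ∀ x ∈ s, |f x| ≤ C) (hDg : ∀ x ∈ s, |g x| ≤ D) :
    eVariationOn (fun x => f x * g x) s ≤
      ENNReal.ofReal C * eVariationOn g s + ENNReal.ofReal D * eVariationOn f s := by
  apply iSup_le
  rintro ⟨n, u, hu, us⟩
  have key : ∀ i, edist (f (u (i+1)) * g (u (i+1))) (f (u i) * g (u i)) ≤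
      ENNReal.ofReal C * edist (g (u (i+1))) (g (u i))
        + ENNReal.ofReal D * edist (f (u (i+1))) (f (u i)) := by
    intro i
    have hC0 : 0 ≤ C := (abs_nonneg _).trans (hCf _ (us 0))
    have hD0 : 0 ≤ D := (abs_nonneg _).trans (hDg _ (us 0))
    rw [edist_dist, edist_dist, edist_dist, ← ENNReal.ofReal_mul hC0,
      ← ENNReal.ofReal_mul hD0,
      ← ENNReal.ofReal_add (mul_nonneg hC0 dist_nonneg) (mul_nonneg hD0 dist_nonneg)]
    apply ENNReal.ofReal_le_ofReal
    have hrw : f (u (i+1)) * g (u (i+1)) - f (u i) * g (u i)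
        = f (u (i+1)) * (g (u (i+1)) - g (u i)) + (f (u (i+1)) - f (u i)) * g (u i) := by ring
    rw [Real.dist_eq, hrw]
    have h1 : |f (u (i+1))| ≤ C := hCf _ (us (i+1))
    have h2 : |g (u i)| ≤ D := hDg _ (us i)
    calc |f (u (i+1)) * (g (u (i+1)) - g (u i)) + (f (u (i+1)) - f (u i)) * g (u i)|
        ≤ |f (u (i+1))| * |g (u (i+1)) - g (u i)| + |f (u (i+1)) - f (u i)| * |g (u i)| := by
          refine (abs_add_le _ _).trans ?_
          rw [abs_mul, abs_mul]
      _ ≤ C * |g (u (i+1)) - g (u i)| + |f (u (i+1)) - f (u i)| * D := by gcongr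
      _ = C * dist (g (u (i+1))) (g (u i)) + D * dist (f (u (i+1))) (f (u i)) := by
          rw [Real.dist_eq, Real.dist_eq]; ring
  calc (∑ i ∈ Finset.range n, edist (f (u (i+1)) * g (u (i+1))) (f (u i) * g (u i)))
      ≤ ∑ i ∈ Finset.range n, (ENNReal.ofReal C * edist (g (u (i+1))) (g (u i))
          + ENNReal.ofReal D * edist (f (u (i+1))) (f (u i))) :=
        Finset.sum_le_sum fun i _ => key i
    _ = ENNReal.ofReal C * (∑ i ∈ Finset.range n, edist (g (u (i+1))) (g (u i)))
        + ENNReal.ofReal D * ∑ i ∈ Finset.range n, edist (f (u (i+1))) (f (u i)) := by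
        rw [Finset.sum_add_distrib, Finset.mul_sum, Finset.mul_sum]
    _ ≤ _ := add_le_add (mul_le_mul_right (eVariationOn.sum_le (f := g) (n := n) hu us) _)
          (mul_le_mul_right (eVariationOn.sum_le (f := f) (n := n) hu us) _)

lemma bvOn_mul {f g : ℝ → ℝ} {s : Set ℝ} {C D : ℝ}
    (hf : BoundedVariationOn f s) (hg : BoundedVariationOn g s)
    (hCf : ∀ x ∈ s, |f x| ≤ C) (hDg : ∀ x ∈ s, |g x| ≤ D) :
    BoundedVariationOn (fun x => f x * g x) s :=
  ne_top_of_le_ne_top (by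
    rw [Ne, ENNReal.add_eq_top]
    exact not_or.mpr ⟨ENNReal.mul_ne_top ENNReal.ofReal_ne_top hg,
      ENNReal.mul_ne_top ENNReal.ofReal_ne_top hf⟩) (evar_mul_le hCf hDg)

lemma monotoneOn_bvOn {a b : ℝ} {f : ℝ → ℝ} (hf : MonotoneOn f (Icc a b)) :
    BoundedVariationOn f (Icc a b) := by
  rcases le_or_gt a b with hab | hab
  · have h := hf.eVariationOn_le (Set.left_mem_Icc.2 hab) (Set.right_mem_Icc.2 hab)
    rw [Set.inter_self] at h
    exact ne_top_of_le_ne_top ENNReal.ofReal_ne_top h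
  · rw [Set.Icc_eq_empty_of_lt hab]
    simp [BoundedVariationOn, eVariationOn.subsingleton f subsingleton_empty]

lemma antitoneOn_bvOn {a b : ℝ} {f : ℝ → ℝ} (hf : AntitoneOn f (Icc a b)) :
    BoundedVariationOn f (Icc a b) := by
  have h1 : BoundedVariationOn (fun x => -f x) (Icc a b) :=
    monotoneOn_bvOn (fun x hx y hy hxy => neg_le_neg (hf hx hy hxy))
  have := bvOn_neg h1
  simpa using this

end Stmt7Aux

namespace Stmt7Aux

section Measures

variable {a b : ℝ} {lm lp : ℝ → ℝ} {μm μp : MeasureTheory.Measure ℝ}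

lemma isFiniteMeasure_muM (hab : a ≤ b) (hμm : IsMuMinus a b lm μm) :
    IsFiniteMeasure μm := by
  constructor
  have : μm univ ≤ μm (Icc a b) + μm (Icc a b)ᶜ := by
    rw [← union_compl_self (Icc a b)] at *
    exact measure_union_le _ _
  rw [hμm.1 a ⟨le_rfl, hab⟩, hμm.2] at this
  exact lt_of_le_of_lt (by simpa using this) ENNReal.ofReal_lt_top

lemma isFiniteMeasure_muP (hab : a ≤ b) (hμp : IsMuPlus a b lp μp) :
    IsFiniteMeasure μp := by
  constructor
  have : μp univ ≤ μp (Icc a b) + μp (Icc a b)ᶜ := by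
    rw [← union_compl_self (Icc a b)] at *
    exact measure_union_le _ _
  rw [hμp.1 b ⟨hab, le_rfl⟩, hμp.2] at this
  exact lt_of_le_of_lt (by simpa using this) ENNReal.ofReal_lt_top

lemma muM_Ici (hμm : IsMuMinus a b lm μm) {x : ℝ} (hx : x ∈ Icc a b) :
    μm (Ici x) = ENNReal.ofReal (lm x) := by
  rw [← hμm.1 x hx]
  symm
  apply measure_eq_measure_of_null_diff (fun y hy => hy.1)
  apply measure_mono_null _ hμm.2
  intro y hy
  obtain ⟨hxy, hnot⟩ := hy
  have hb : ¬ y ≤ b := fun h => hnot ⟨hxy, h⟩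
  simp only [mem_compl_iff, mem_Icc, not_and]
  exact fun _ => hb

lemma muP_Iic (hμp : IsMuPlus a b lp μp) {x : ℝ} (hx : x ∈ Icc a b) :
    μp (Iic x) = ENNReal.ofReal (lp x) := by
  rw [← hμp.1 x hx]
  symm
  apply measure_eq_measure_of_null_diff (fun y hy => hy.2)
  apply measure_mono_null _ hμp.2
  intro y hy
  obtain ⟨hxy, hnot⟩ := hy
  have hb : ¬ a ≤ y := fun h => hnot ⟨h, hxy⟩
  simp only [mem_compl_iff, mem_Icc, not_and]
  exact fun h => absurd h hb

lemma muM_Ico (hμm : IsMuMinus a b lm μm) {x y : ℝ}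
    (hax : a ≤ x) (hxy : x ≤ y) (hyb : y ≤ b)
    (h1 : lm y ≤ lm x) (h2 : 0 ≤ lm y) :
    μm (Ico x y) = ENNReal.ofReal (lm x - lm y) := by
  have hx' : x ∈ Icc a b := ⟨hax, hxy.trans hyb⟩
  have hy' : y ∈ Icc a b := ⟨hax.trans hxy, hyb⟩
  have hadd : μm (Ico x y) + μm (Ici y) = μm (Ici x) := by
    rw [← measure_union ((Set.Iio_disjoint_Ici (le_refl y)).mono_left Set.Ico_subset_Iio_self) measurableSet_Ici,
      Set.Ico_union_Ici_eq_Ici hxy]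
  rw [muM_Ici hμm hx', muM_Ici hμm hy'] at hadd
  have : ENNReal.ofReal (lm x) =
      ENNReal.ofReal (lm x - lm y) + ENNReal.ofReal (lm y) := by
    rw [← ENNReal.ofReal_add (by linarith) h2]; ring_nf
  rw [this] at hadd
  exact WithTop.add_right_cancel ENNReal.ofReal_ne_top hadd

lemma muP_Ioc (hμp : IsMuPlus a b lp μp) {x y : ℝ}
    (hax : a ≤ x) (hxy : x ≤ y) (hyb : y ≤ b)
    (h1 : lp x ≤ lp y) (h2 : 0 ≤ lp x) :
    μp (Ioc x y) = ENNReal.ofReal (lp y - lp x) := by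
  have hx' : x ∈ Icc a b := ⟨hax, hxy.trans hyb⟩
  have hy' : y ∈ Icc a b := ⟨hax.trans hxy, hyb⟩
  have hadd : μp (Iic x) + μp (Ioc x y) = μp (Iic y) := by
    rw [← measure_union ((Set.Iic_disjoint_Ioi (le_refl x)).mono_right Set.Ioc_subset_Ioi_self) measurableSet_Ioc,
      Set.Iic_union_Ioc_eq_Iic hxy]
  rw [muP_Iic hμp hx', muP_Iic hμp hy'] at hadd
  have : ENNReal.ofReal (lp y) =
      ENNReal.ofReal (lp x) + ENNReal.ofReal (lp y - lp x) := by
    rw [← ENNReal.ofReal_add h2 (by linarith)]; ring_nf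
  rw [this] at hadd
  exact (WithTop.add_left_cancel ENNReal.ofReal_ne_top hadd)

lemma muM_singleton (hμm : IsMuMinus a b lm μm)
    (hcont : ContinuousOn lm (Icc a b)) (hanti : AntitoneOn lm (Icc a b))
    (h0 : ∀ z ∈ Icc a b, 0 ≤ lm z) {x : ℝ} (hx : x ∈ Ico a b) :
    μm {x} = 0 := by
  refine le_antisymm ?_ zero_le
  refine ENNReal.le_of_forall_pos_le_add fun ε hε _ => ?_
  rw [zero_add]
  have hc : ContinuousWithinAt lm (Icc a b) x := hcont x ⟨hx.1, hx.2.le⟩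
  rw [Metric.continuousWithinAt_iff] at hc
  obtain ⟨δ, hδ, hcc⟩ := hc (ε : ℝ) (by exact_mod_cast hε)
  set y := min b (x + δ/2) with hy
  have hxy : x < y := lt_min hx.2 (by linarith)
  have hyb : y ≤ b := min_le_left _ _
  have hay : a ≤ y := hx.1.trans hxy.le
  have hyI : y ∈ Icc a b := ⟨hay, hyb⟩
  have hdist : dist y x < δ := by
    rw [Real.dist_eq, abs_of_nonneg (by linarith)]
    have : y ≤ x + δ/2 := min_le_right _ _
    linarith
  have hlt : lm x - lm y < (ε : ℝ) := by
    have := hcc hyI hdist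
    rw [Real.dist_eq] at this
    have h1 := abs_lt.1 this
    linarith [h1.1]
  calc μm {x} ≤ μm (Ico x y) := measure_mono (by simp [hxy])
    _ = ENNReal.ofReal (lm x - lm y) :=
        muM_Ico hμm hx.1 hxy.le hyb (hanti ⟨hx.1, hx.2.le⟩ hyI hxy.le) (h0 y hyI)
    _ ≤ ENNReal.ofReal (ε : ℝ) := ENNReal.ofReal_le_ofReal hlt.le
    _ = (ε : ℝ≥0∞) := ENNReal.ofReal_coe_nnreal

lemma muP_singleton (hμp : IsMuPlus a b lp μp)
    (hcont : ContinuousOn lp (Icc a b)) (hmono : MonotoneOn lp (Icc a b))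
    (h0 : ∀ z ∈ Icc a b, 0 ≤ lp z) {x : ℝ} (hx : x ∈ Ioc a b) :
    μp {x} = 0 := by
  refine le_antisymm ?_ zero_le
  refine ENNReal.le_of_forall_pos_le_add fun ε hε _ => ?_
  rw [zero_add]
  have hc : ContinuousWithinAt lp (Icc a b) x := hcont x ⟨hx.1.le, hx.2⟩
  rw [Metric.continuousWithinAt_iff] at hc
  obtain ⟨δ, hδ, hcc⟩ := hc (ε : ℝ) (by exact_mod_cast hε)
  set y := max a (x - δ/2) with hy
  have hxy : y < x := max_lt hx.1 (by linarith)
  have hay : a ≤ y := le_max_left _ _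
  have hyb : y ≤ b := hxy.le.trans hx.2
  have hyI : y ∈ Icc a b := ⟨hay, hyb⟩
  have hdist : dist y x < δ := by
    rw [Real.dist_eq, abs_of_nonpos (by linarith)]
    have : x - δ/2 ≤ y := le_max_right _ _
    linarith
  have hlt : lp x - lp y < (ε : ℝ) := by
    have := hcc hyI hdist
    rw [Real.dist_eq] at this
    have h1 := abs_lt.1 this
    linarith [h1.1]
  calc μp {x} ≤ μp (Ioc y x) := measure_mono (by simp [hxy])
    _ = ENNReal.ofReal (lp x - lp y) :=
        muP_Ioc hμp hay hxy.le hx.2 (hmono hyI ⟨hx.1.le, hx.2⟩ hxy.le) (h0 y hyI)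
    _ ≤ ENNReal.ofReal (ε : ℝ) := ENNReal.ofReal_le_ofReal hlt.le
    _ = (ε : ℝ≥0∞) := ENNReal.ofReal_coe_nnreal

lemma muM_Iic_a (hab : a < b) (hμm : IsMuMinus a b lm μm)
    (hcont : ContinuousOn lm (Icc a b)) (hanti : AntitoneOn lm (Icc a b))
    (h0 : ∀ z ∈ Icc a b, 0 ≤ lm z) : μm (Iic a) = 0 := by
  rw [← Set.Iio_union_right]
  refine measure_union_null ?_ (muM_singleton hμm hcont hanti h0 ⟨le_rfl, hab⟩)
  refine measure_mono_null ?_ hμm.2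
  intro y hy
  simp only [mem_Iio] at hy
  simp only [mem_compl_iff, mem_Icc, not_and]
  intro h; linarith

lemma muP_Ici_b (hab : a < b) (hμp : IsMuPlus a b lp μp)
    (hcont : ContinuousOn lp (Icc a b)) (hmono : MonotoneOn lp (Icc a b))
    (h0 : ∀ z ∈ Icc a b, 0 ≤ lp z) : μp (Ici b) = 0 := by
  rw [← Set.Ioi_union_left]
  refine measure_union_null ?_ (muP_singleton hμp hcont hmono h0 ⟨hab, le_rfl⟩)
  refine measure_mono_null ?_ hμp.2
  intro y hy
  simp only [mem_Ioi] at hy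
  simp only [mem_compl_iff, mem_Icc, not_and]
  intro h; linarith

lemma setIntegral_Iio_eq_Ioo (hab : a < b) (hμm : IsMuMinus a b lm μm)
    (hcont : ContinuousOn lm (Icc a b)) (hanti : AntitoneOn lm (Icc a b))
    (h0 : ∀ z ∈ Icc a b, 0 ≤ lm z) {q : ℝ} (hq : q ∈ Ioc a b) (W : ℝ → ℝ) :
    ∫ x in Iio q, W x ∂μm = ∫ x in Ioo a q, W x ∂μm := by
  apply setIntegral_congr_set
  rw [MeasureTheory.ae_eq_set]
  constructor
  · refine measure_mono_null ?_ (muM_Iic_a hab hμm hcont hanti h0)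
    intro y hy
    obtain ⟨h1, h2⟩ := hy
    simp only [mem_Iio] at h1
    simp only [mem_Ioo, not_and] at h2
    simp only [mem_Iic]
    by_contra hya
    push_neg at hya
    exact (h2 hya) h1
  · rw [Set.diff_eq_empty.mpr fun y hy => hy.2]
    exact measure_empty

lemma setIntegral_Ioi_eq_Ioo (hab : a < b) (hμp : IsMuPlus a b lp μp)
    (hcont : ContinuousOn lp (Icc a b)) (hmono : MonotoneOn lp (Icc a b))
    (h0 : ∀ z ∈ Icc a b, 0 ≤ lp z) {m : ℝ} (hm : m ∈ Ico a b) (W : ℝ → ℝ) :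
    ∫ x in Ioi m, W x ∂μp = ∫ x in Ioo m b, W x ∂μp := by
  apply setIntegral_congr_set
  rw [MeasureTheory.ae_eq_set]
  constructor
  · refine measure_mono_null ?_ (muP_Ici_b hab hμp hcont hmono h0)
    intro y hy
    obtain ⟨h1, h2⟩ := hy
    simp only [mem_Ioi] at h1
    simp only [mem_Ioo, not_and] at h2
    simp only [mem_Ici]
    by_contra hyb
    push_neg at hyb
    exact (h2 h1) hyb
  · rw [Set.diff_eq_empty.mpr fun y hy => hy.1]
    exact measure_empty

end Measures

end Stmt7Aux

namespace Stmt7Aux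

section Books

variable {a b : ℝ}

lemma minus_setOf_finite (X : OrderBook) : ({x | x ∈ X.minus} : Set ℝ).Finite :=
  X.minus.finite_toSet

lemma plus_setOf_finite (X : OrderBook) : ({x | x ∈ X.plus} : Set ℝ).Finite :=
  X.plus.finite_toSet

lemma a_le_Mminus (X : OrderBook) : a ≤ Mminus a X :=
  le_csSup (((minus_setOf_finite X).insert a).bddAbove) (mem_insert _ _)

lemma le_Mminus {X : OrderBook} {x : ℝ} (hx : x ∈ X.minus) : x ≤ Mminus a X :=
  le_csSup (((minus_setOf_finite X).insert a).bddAbove) (mem_insert_of_mem _ hx)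

lemma Mminus_mem (X : OrderBook) : Mminus a X = a ∨ Mminus a X ∈ X.minus := by
  have := Set.Nonempty.csSup_mem (s := insert a {x | x ∈ X.minus})
    (insert_nonempty _ _) ((minus_setOf_finite X).insert a)
  rcases this with h | h
  · exact Or.inl h
  · exact Or.inr h

lemma Mminus_of_eq {X : OrderBook} (h : X.minus = 0) : Mminus a X = a := by
  rw [Mminus]
  have : ({x | x ∈ X.minus} : Set ℝ) = ∅ := by simp [h]
  rw [this, LawfulSingleton.insert_empty_eq, csSup_singleton]

lemma Mminus_of_ne (hab : a < b) {X : OrderBook} (hX : IsConfig a b X)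
    (h : X.minus ≠ 0) : Mminus a X ∈ X.minus ∧ Mminus a X ∈ Ioo a b := by
  rcases Mminus_mem (a := a) X with h1 | h1
  · obtain ⟨x, hx⟩ := Multiset.exists_mem_of_ne_zero h
    have h2 := le_Mminus (a := a) hx
    have h3 := (hX.1 x hx).1
    rw [h1] at h2
    linarith
  · exact ⟨h1, hX.1 _ h1⟩

lemma Mminus_mem_Ico (hab : a < b) {X : OrderBook} (hX : IsConfig a b X) :
    Mminus a X ∈ Ico a b := by
  rcases Multiset.empty_or_exists_mem X.minus with h | ⟨x, hx⟩
  · rw [Mminus_of_eq h]; exact ⟨le_rfl, hab⟩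
  · have h1 := (Mminus_of_ne hab hX (fun h0 => by simp [h0] at hx)).2
    exact ⟨h1.1.le, h1.2⟩

lemma Mplus_le (X : OrderBook) : Mplus b X ≤ b :=
  csInf_le (((plus_setOf_finite X).insert b).bddBelow) (mem_insert _ _)

lemma Mplus_le' {X : OrderBook} {x : ℝ} (hx : x ∈ X.plus) : Mplus b X ≤ x :=
  csInf_le (((plus_setOf_finite X).insert b).bddBelow) (mem_insert_of_mem _ hx)

lemma Mplus_mem (X : OrderBook) : Mplus b X = b ∨ Mplus b X ∈ X.plus := by
  have := Set.Nonempty.csInf_mem (s := insert b {x | x ∈ X.plus})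
    (insert_nonempty _ _) ((plus_setOf_finite X).insert b)
  rcases this with h | h
  · exact Or.inl h
  · exact Or.inr h

lemma Mplus_of_eq {X : OrderBook} (h : X.plus = 0) : Mplus b X = b := by
  rw [Mplus]
  have : ({x | x ∈ X.plus} : Set ℝ) = ∅ := by simp [h]
  rw [this, LawfulSingleton.insert_empty_eq, csInf_singleton]

lemma Mplus_of_ne (hab : a < b) {X : OrderBook} (hX : IsConfig a b X)
    (h : X.plus ≠ 0) : Mplus b X ∈ X.plus ∧ Mplus b X ∈ Ioo a b := by
  rcases Mplus_mem (b := b) X with h1 | h1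
  · obtain ⟨x, hx⟩ := Multiset.exists_mem_of_ne_zero h
    have h2 := Mplus_le' (b := b) hx
    have h3 := (hX.2.1 x hx).2
    rw [h1] at h2
    linarith
  · exact ⟨h1, hX.2.1 _ h1⟩

lemma Mplus_mem_Ioc (hab : a < b) {X : OrderBook} (hX : IsConfig a b X) :
    Mplus b X ∈ Ioc a b := by
  rcases Multiset.empty_or_exists_mem X.plus with h | ⟨x, hx⟩
  · rw [Mplus_of_eq h]; exact ⟨hab, le_rfl⟩
  · have h1 := (Mplus_of_ne hab hX (fun h0 => by simp [h0] at hx)).2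
    exact ⟨h1.1, h1.2.le⟩

lemma Mminus_lt_Mplus (hab : a < b) {X : OrderBook} (hX : IsConfig a b X) :
    Mminus a X < Mplus b X := by
  rcases Multiset.empty_or_exists_mem X.minus with h | ⟨x, hx⟩
  · rw [Mminus_of_eq h]; exact (Mplus_mem_Ioc hab hX).1
  · have hm := Mminus_of_ne hab hX (fun h0 => by simp [h0] at hx)
    rcases Multiset.empty_or_exists_mem X.plus with h' | ⟨y, hy⟩
    · rw [Mplus_of_eq h']; exact hm.2.2
    · have hp := Mplus_of_ne hab hX (fun h0 => by simp [h0] at hy)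
      exact hX.2.2 _ hm.1 _ hp.1

lemma linF_pair (wm wp : ℝ → ℝ) (s t : Multiset ℝ) :
    linF wm wp ⟨s, t⟩ = (s.map wm).sum + (t.map wp).sum := rfl

lemma linF_cons_minus (wm wp : ℝ → ℝ) (u : ℝ) (X : OrderBook) :
    linF wm wp ⟨u ::ₘ X.minus, X.plus⟩ - linF wm wp X = wm u := by
  simp [linF]

lemma linF_cons_plus (wm wp : ℝ → ℝ) (u : ℝ) (X : OrderBook) :
    linF wm wp ⟨X.minus, u ::ₘ X.plus⟩ - linF wm wp X = wp u := by
  simp [linF]; try ring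

lemma linF_erase_minus (wm wp : ℝ → ℝ) {x : ℝ} {X : OrderBook} (hx : x ∈ X.minus) :
    linF wm wp ⟨X.minus.erase x, X.plus⟩ - linF wm wp X = -wm x := by
  have h1 : X.minus = x ::ₘ X.minus.erase x := (Multiset.cons_erase hx).symm
  calc linF wm wp ⟨X.minus.erase x, X.plus⟩ - linF wm wp X
      = linF wm wp ⟨X.minus.erase x, X.plus⟩ -
          linF wm wp ⟨x ::ₘ X.minus.erase x, X.plus⟩ := by
        rw [← h1]
    _ = -wm x := by simp [linF]

lemma linF_erase_plus (wm wp : ℝ → ℝ) {x : ℝ} {X : OrderBook} (hx : x ∈ X.plus) :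
    linF wm wp ⟨X.minus, X.plus.erase x⟩ - linF wm wp X = -wp x := by
  have h1 : X.plus = x ::ₘ X.plus.erase x := (Multiset.cons_erase hx).symm
  calc linF wm wp ⟨X.minus, X.plus.erase x⟩ - linF wm wp X
      = linF wm wp ⟨X.minus, X.plus.erase x⟩ -
          linF wm wp ⟨X.minus, x ::ₘ X.plus.erase x⟩ := by
        rw [← h1]
    _ = -wp x := by simp [linF]; try ring

lemma integrand_minus (hab : a < b) {X : OrderBook} (hX : IsConfig a b X)
    {wm wp : ℝ → ℝ} (hwma : wm a = 0) (hwpb : wp b = 0)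
    {u : ℝ} (hu : u ∈ Icc a b) :
    linF wm wp (Lminus a b u X) - linF wm wp X =
      (if Mplus b X ≤ u then -wp (Mplus b X) else wm u) := by
  set q := Mplus b X with hq
  rcases Multiset.empty_or_exists_mem X.plus with h | ⟨y, hy⟩
  · have hqb : q = b := Mplus_of_eq h
    rw [Lminus, if_neg (by rintro ⟨h1, -⟩; exact h1 h)]
    by_cases hu2 : u ∈ Ioo a b
    · rw [if_pos hu2, if_neg (by rw [hqb]; exact not_le.mpr hu2.2)]
      exact linF_cons_minus wm wp u X
    · rw [if_neg hu2, sub_self]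
      rcases eq_or_lt_of_le hu.2 with hb2 | hb2
      · rw [if_pos (le_of_eq (by rw [hqb, hb2])), hqb, hwpb, neg_zero]
      · have hua : u = a := by
          by_contra h2
          exact hu2 ⟨lt_of_le_of_ne hu.1 (Ne.symm h2), hb2⟩
        rw [if_neg (by rw [hqb]; subst hua; exact not_le.mpr hab), hua, hwma]
  · have hne : X.plus ≠ 0 := fun h0 => by simp [h0] at hy
    have hqm := Mplus_of_ne hab hX hne
    by_cases hcase : q ≤ u
    · rw [Lminus, if_pos ⟨hne, hcase⟩, if_pos hcase]
      exact linF_erase_plus wm wp hqm.1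
    · rw [Lminus, if_neg (by rintro ⟨-, h2⟩; exact hcase h2), if_neg hcase]
      have hub : u < b := lt_of_lt_of_le (not_le.1 hcase) hqm.2.2.le
      by_cases hu2 : u ∈ Ioo a b
      · rw [if_pos hu2]; exact linF_cons_minus wm wp u X
      · have hua : u = a := by
          by_contra h2
          exact hu2 ⟨lt_of_le_of_ne hu.1 (Ne.symm h2), hub⟩
        rw [if_neg hu2, hua, hwma, sub_self]

lemma integrand_plus (hab : a < b) {X : OrderBook} (hX : IsConfig a b X)
    {wm wp : ℝ → ℝ} (hwma : wm a = 0) (hwpb : wp b = 0)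
    {u : ℝ} (hu : u ∈ Icc a b) :
    linF wm wp (Lplus a b u X) - linF wm wp X =
      (if u ≤ Mminus a X then -wm (Mminus a X) else wp u) := by
  set m := Mminus a X with hm
  rcases Multiset.empty_or_exists_mem X.minus with h | ⟨y, hy⟩
  · have hma : m = a := Mminus_of_eq h
    rw [Lplus, if_neg (by rintro ⟨h1, -⟩; exact h1 h)]
    by_cases hu2 : u ∈ Ioo a b
    · rw [if_pos hu2, if_neg (by rw [hma]; exact not_le.mpr hu2.1)]
      exact linF_cons_plus wm wp u X
    · rw [if_neg hu2, sub_self]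
      rcases eq_or_lt_of_le hu.1 with ha2 | ha2
      · rw [if_pos (le_of_eq (by rw [hma, ← ha2])), hma, hwma, neg_zero]
      · have hub : u = b := by
          by_contra h2
          exact hu2 ⟨ha2, lt_of_le_of_ne hu.2 h2⟩
        rw [if_neg (by rw [hma]; subst hub; exact not_le.mpr hab), hub, hwpb]
  · have hne : X.minus ≠ 0 := fun h0 => by simp [h0] at hy
    have hmm := Mminus_of_ne hab hX hne
    by_cases hcase : u ≤ m
    · rw [Lplus, if_pos ⟨hne, hcase⟩, if_pos hcase]
      exact linF_erase_minus wm wp hmm.1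
    · rw [Lplus, if_neg (by rintro ⟨-, h2⟩; exact hcase h2), if_neg hcase]
      have hua : a < u := lt_of_le_of_lt hmm.2.1.le (not_le.1 hcase)
      by_cases hu2 : u ∈ Ioo a b
      · rw [if_pos hu2]; exact linF_cons_plus wm wp u X
      · have hub : u = b := by
          by_contra h2
          exact hu2 ⟨hua, lt_of_le_of_ne hu.2 h2⟩
        rw [if_neg hu2, hub, hwpb, sub_self]

end Books

end Stmt7Aux

namespace Stmt7Aux

section Master

variable {a b : ℝ} {lm lp : ℝ → ℝ} {μm μp : MeasureTheory.Measure ℝ}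

lemma genOp_master (hab : a < b) (hA3 : A3 a b lm lp)
    (hμm : IsMuMinus a b lm μm) (hμp : IsMuPlus a b lp μp)
    {Wm Wp : ℝ → ℝ} {C : ℝ}
    (hWm : Measurable Wm) (hWp : Measurable Wp)
    (hbm : ∀ x, |Wm x| ≤ C) (hbp : ∀ x, |Wp x| ≤ C)
    (hwma : Wm a = 0) (hwpb : Wp b = 0)
    {X : OrderBook} (hX : IsConfig a b X) :
    genOp a b μm μp (linF Wm Wp) X =
      -(Wp (Mplus b X) * lm (Mplus b X)) - (∫ x in Ico (Mplus b X) b, Wm x ∂μm)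
        + (∫ x in Ioo a b, Wm x ∂μm)
        - (Wm (Mminus a X) * lp (Mminus a X)) - (∫ x in Ioc a (Mminus a X), Wp x ∂μp)
        + (∫ x in Ioo a b, Wp x ∂μp) := by
  haveI : IsFiniteMeasure μm := isFiniteMeasure_muM hab.le hμm
  haveI : IsFiniteMeasure μp := isFiniteMeasure_muP hab.le hμp
  set q := Mplus b X with hqdef
  set m := Mminus a X with hmdef
  have hq : q ∈ Ioc a b := Mplus_mem_Ioc hab hX
  have hm : m ∈ Ico a b := Mminus_mem_Ico hab hX
  have hqI : q ∈ Icc a b := ⟨hq.1.le, hq.2⟩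
  have hmI : m ∈ Icc a b := ⟨hm.1, hm.2.le⟩
  have hWmInt : Integrable Wm μm := integrable_of_bound μm hWm hbm
  have hWpInt : Integrable Wp μp := integrable_of_bound μp hWp hbp
  -- minus side
  have e1 : (∫ u, (linF Wm Wp (Lminus a b u X) - linF Wm Wp X) ∂μm)
      = -(Wp q * lm q) + ∫ x in Ioo a q, Wm x ∂μm := by
    set g : ℝ → ℝ := fun u => if q ≤ u then -Wp q else Wm u with hgdef
    have hg : Measurable g := Measurable.ite measurableSet_Ici measurable_const hWm
    have hbg : ∀ u, |g u| ≤ C := by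
      intro u
      show |if q ≤ u then -Wp q else Wm u| ≤ C
      by_cases h : q ≤ u
      · rw [if_pos h, abs_neg]; exact hbp q
      · rw [if_neg h]; exact hbm u
    have hIcc : Icc a b ∈ ae μm := by rw [mem_ae_iff]; exact hμm.2
    have h1 : (fun u => linF Wm Wp (Lminus a b u X) - linF Wm Wp X) =ᵐ[μm] g := by
      filter_upwards [hIcc] with u hu
      exact integrand_minus hab hX hwma hwpb hu
    have hint : Integrable g μm := integrable_of_bound μm hg hbg
    rw [integral_congr_ae h1, ← integral_add_compl (measurableSet_Ici (a := q)) hint,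
      compl_Ici]
    have h2 : (∫ u in Ici q, g u ∂μm) = -(Wp q * lm q) := by
      rw [setIntegral_congr_fun measurableSet_Ici
        (fun u (hu : q ≤ u) => if_pos hu), setIntegral_const, measureReal_def,
        muM_Ici hμm hqI, ENNReal.toReal_ofReal (hA3.2.2.2.2.1 q hqI), smul_eq_mul]
      ring
    have h3 : (∫ u in Iio q, g u ∂μm) = ∫ x in Ioo a q, Wm x ∂μm := by
      rw [setIntegral_congr_fun measurableSet_Iio
        (fun u (hu : u < q) => if_neg (not_le.mpr hu))]
      exact setIntegral_Iio_eq_Ioo hab hμm hA3.1 hA3.2.2.1 hA3.2.2.2.2.1 hq Wm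
    rw [h2, h3]
  -- plus side
  have e2 : (∫ u, (linF Wm Wp (Lplus a b u X) - linF Wm Wp X) ∂μp)
      = -(Wm m * lp m) + ∫ x in Ioo m b, Wp x ∂μp := by
    set g : ℝ → ℝ := fun u => if u ≤ m then -Wm m else Wp u with hgdef
    have hg : Measurable g := Measurable.ite measurableSet_Iic measurable_const hWp
    have hbg : ∀ u, |g u| ≤ C := by
      intro u
      show |if u ≤ m then -Wm m else Wp u| ≤ C
      by_cases h : u ≤ m
      · rw [if_pos h, abs_neg]; exact hbm m
      · rw [if_neg h]; exact hbp u
    have hIcc : Icc a b ∈ ae μp := by rw [mem_ae_iff]; exact hμp.2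
    have h1 : (fun u => linF Wm Wp (Lplus a b u X) - linF Wm Wp X) =ᵐ[μp] g := by
      filter_upwards [hIcc] with u hu
      exact integrand_plus hab hX hwma hwpb hu
    have hint : Integrable g μp := integrable_of_bound μp hg hbg
    rw [integral_congr_ae h1, ← integral_add_compl (measurableSet_Iic (a := m)) hint,
      compl_Iic]
    have h2 : (∫ u in Iic m, g u ∂μp) = -(Wm m * lp m) := by
      rw [setIntegral_congr_fun measurableSet_Iic
        (fun u (hu : u ≤ m) => if_pos hu), setIntegral_const, measureReal_def,
        muP_Iic hμp hmI, ENNReal.toReal_ofReal (hA3.2.2.2.2.2 m hmI), smul_eq_mul]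
      ring
    have h3 : (∫ u in Ioi m, g u ∂μp) = ∫ x in Ioo m b, Wp x ∂μp := by
      rw [setIntegral_congr_fun measurableSet_Ioi
        (fun u (hu : m < u) => if_neg (not_le.mpr hu))]
      exact setIntegral_Ioi_eq_Ioo hab hμp hA3.2.1 hA3.2.2.2.1 hA3.2.2.2.2.2 hm Wp
    rw [h2, h3]
  -- splitting
  have s1 : (∫ x in Ioo a b, Wm x ∂μm)
      = (∫ x in Ioo a q, Wm x ∂μm) + ∫ x in Ico q b, Wm x ∂μm := by
    rw [← Set.Ioo_union_Ico_eq_Ioo hq.1 hq.2,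
      setIntegral_union
        (Disjoint.mono Set.Ioo_subset_Iio_self Set.Ico_subset_Ici_self
          (Set.Iio_disjoint_Ici le_rfl))
        measurableSet_Ico hWmInt.integrableOn hWmInt.integrableOn]
  have s2 : (∫ x in Ioo a b, Wp x ∂μp)
      = (∫ x in Ioc a m, Wp x ∂μp) + ∫ x in Ioo m b, Wp x ∂μp := by
    rw [← Set.Ioc_union_Ioo_eq_Ioo hm.1 hm.2,
      setIntegral_union
        (Disjoint.mono Set.Ioc_subset_Iic_self Set.Ioo_subset_Ioi_self
          (Set.Iic_disjoint_Ioi le_rfl))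
        measurableSet_Ioo hWpInt.integrableOn hWpInt.integrableOn]
  rw [genOp, e1, e2]
  linarith [s1, s2]

end Master

end Stmt7Aux

namespace Stmt7Aux

/-- cumulative integral from the left against `μp` -/
def Jm (μp : MeasureTheory.Measure ℝ) (a : ℝ) (w : ℝ → ℝ) : ℝ → ℝ :=
  fun m => ∫ x in Ioc a m, w x ∂μp

/-- cumulative integral from the right against `μm` -/
def Jp (μm : MeasureTheory.Measure ℝ) (b : ℝ) (w : ℝ → ℝ) : ℝ → ℝ :=
  fun q => ∫ x in Ico q b, w x ∂μm

section JBasic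

variable {a b : ℝ} {μm μp : MeasureTheory.Measure ℝ} {w : ℝ → ℝ} {C : ℝ}

lemma abs_max_le' {w : ℝ → ℝ} {C : ℝ} (hb : ∀ x, |w x| ≤ C) (x : ℝ) :
    |max (w x) 0| ≤ C := by
  rw [abs_of_nonneg (le_max_right _ _)]
  exact max_le ((le_abs_self _).trans (hb x)) ((abs_nonneg _).trans (hb x))

lemma abs_maxneg_le' {w : ℝ → ℝ} {C : ℝ} (hb : ∀ x, |w x| ≤ C) (x : ℝ) :
    |max (-w x) 0| ≤ C := by
  rw [abs_of_nonneg (le_max_right _ _)]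
  exact max_le ((neg_le_abs _).trans (hb x)) ((abs_nonneg _).trans (hb x))

lemma Jm_decomp [IsFiniteMeasure μp] (hw : Measurable w) (hb : ∀ x, |w x| ≤ C) :
    Jm μp a w = fun m => (∫ x in Ioc a m, max (w x) 0 ∂μp)
      - ∫ x in Ioc a m, max (-w x) 0 ∂μp := by
  funext m
  rw [Jm, ← integral_sub]
  · apply setIntegral_congr_fun measurableSet_Ioc
    intro x _
    exact (max_zero_sub_max_neg_zero_eq_self (w x)).symm
  · exact (integrable_of_bound μp (hw.max measurable_const)
      (abs_max_le' hb)).integrableOn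
  · exact (integrable_of_bound μp (hw.neg.max measurable_const)
      (abs_maxneg_le' hb)).integrableOn

lemma Jp_decomp [IsFiniteMeasure μm] (hw : Measurable w) (hb : ∀ x, |w x| ≤ C) :
    Jp μm b w = fun q => (∫ x in Ico q b, max (w x) 0 ∂μm)
      - ∫ x in Ico q b, max (-w x) 0 ∂μm := by
  funext q
  rw [Jp, ← integral_sub]
  · apply setIntegral_congr_fun measurableSet_Ico
    intro x _
    exact (max_zero_sub_max_neg_zero_eq_self (w x)).symm
  · exact (integrable_of_bound μm (hw.max measurable_const)
      (abs_max_le' hb)).integrableOn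
  · exact (integrable_of_bound μm (hw.neg.max measurable_const)
      (abs_maxneg_le' hb)).integrableOn

lemma monotone_cumul_Ioc [IsFiniteMeasure μp] {v : ℝ → ℝ} (hv : Measurable v)
    (hv0 : ∀ x, 0 ≤ v x) {D : ℝ} (hD : ∀ x, |v x| ≤ D) :
    Monotone (fun m => ∫ x in Ioc a m, v x ∂μp) := by
  intro m m' h
  apply setIntegral_mono_set (integrable_of_bound μp hv hD).integrableOn
    (Eventually.of_forall (fun x => hv0 x))
  exact HasSubset.Subset.eventuallyLE (Set.Ioc_subset_Ioc_right h)

lemma antitone_cumul_Ico [IsFiniteMeasure μm] {v : ℝ → ℝ} (hv : Measurable v)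
    (hv0 : ∀ x, 0 ≤ v x) {D : ℝ} (hD : ∀ x, |v x| ≤ D) :
    Antitone (fun q => ∫ x in Ico q b, v x ∂μm) := by
  intro q q' h
  apply setIntegral_mono_set (integrable_of_bound μm hv hD).integrableOn
    (Eventually.of_forall (fun x => hv0 x))
  exact HasSubset.Subset.eventuallyLE (Set.Ico_subset_Ico_left h)

lemma measurable_Jm [IsFiniteMeasure μp] (hw : Measurable w) (hb : ∀ x, |w x| ≤ C) :
    Measurable (Jm μp a w) := by
  rw [Jm_decomp hw hb]
  refine Measurable.sub ?_ ?_
  · exact (monotone_cumul_Ioc (hw.max measurable_const)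
      (fun x => le_max_right _ _)
      (D := C) (abs_max_le' hb)).measurable
  · exact (monotone_cumul_Ioc (hw.neg.max measurable_const)
      (fun x => le_max_right _ _)
      (D := C) (abs_maxneg_le' hb)).measurable

lemma measurable_Jp [IsFiniteMeasure μm] (hw : Measurable w) (hb : ∀ x, |w x| ≤ C) :
    Measurable (Jp μm b w) := by
  rw [Jp_decomp hw hb]
  refine Measurable.sub ?_ ?_
  · exact (antitone_cumul_Ico (hw.max measurable_const)
      (fun x => le_max_right _ _)
      (D := C) (abs_max_le' hb)).measurable
  · exact (antitone_cumul_Ico (hw.neg.max measurable_const)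
      (fun x => le_max_right _ _)
      (D := C) (abs_maxneg_le' hb)).measurable

lemma bvOn_Jm [IsFiniteMeasure μp] (hw : Measurable w) (hb : ∀ x, |w x| ≤ C) :
    BoundedVariationOn (Jm μp a w) (Icc a b) := by
  rw [Jm_decomp hw hb]
  have h1 := monotone_cumul_Ioc (μp := μp) (a := a) (hw.max measurable_const)
      (fun x => le_max_right _ _)
      (D := C) (abs_max_le' hb)
  have h2 := monotone_cumul_Ioc (μp := μp) (a := a) (hw.neg.max measurable_const)
      (fun x => le_max_right _ _)
      (D := C) (abs_maxneg_le' hb)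
  have := bvOn_add (monotoneOn_bvOn (h1.monotoneOn _))
    (bvOn_neg (monotoneOn_bvOn (h2.monotoneOn (Icc a b))))
  simpa [sub_eq_add_neg] using this

lemma bvOn_Jp [IsFiniteMeasure μm] (hw : Measurable w) (hb : ∀ x, |w x| ≤ C) :
    BoundedVariationOn (Jp μm b w) (Icc a b) := by
  rw [Jp_decomp hw hb]
  have h1 := antitone_cumul_Ico (μm := μm) (b := b) (hw.max measurable_const)
      (fun x => le_max_right _ _)
      (D := C) (abs_max_le' hb)
  have h2 := antitone_cumul_Ico (μm := μm) (b := b) (hw.neg.max measurable_const)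
      (fun x => le_max_right _ _)
      (D := C) (abs_maxneg_le' hb)
  have := bvOn_add (antitoneOn_bvOn (h1.antitoneOn _))
    (bvOn_neg (antitoneOn_bvOn (h2.antitoneOn (Icc a b))))
  simpa [sub_eq_add_neg] using this

lemma abs_Jm_le [IsFiniteMeasure μp] (hw : Measurable w) (hb : ∀ x, |w x| ≤ C) (m : ℝ) :
    |Jm μp a w m| ≤ C * (μp (Ioc a m)).toReal :=
  abs_setIntegral_le μp hw hb _

lemma abs_Jp_le [IsFiniteMeasure μm] (hw : Measurable w) (hb : ∀ x, |w x| ≤ C) (q : ℝ) :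
    |Jp μm b w q| ≤ C * (μm (Ico q b)).toReal :=
  abs_setIntegral_le μm hw hb _

lemma Jm_sub (hw1 : Measurable w) {w2 : ℝ → ℝ} (hw2 : Measurable w2)
    [IsFiniteMeasure μp] {C2 : ℝ} (hb1 : ∀ x, |w x| ≤ C) (hb2 : ∀ x, |w2 x| ≤ C2) (m : ℝ) :
    Jm μp a w m - Jm μp a w2 m = ∫ x in Ioc a m, (w x - w2 x) ∂μp := by
  rw [Jm, Jm, ← integral_sub (integrable_of_bound μp hw1 hb1).integrableOn
    (integrable_of_bound μp hw2 hb2).integrableOn]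

lemma Jp_sub (hw1 : Measurable w) {w2 : ℝ → ℝ} (hw2 : Measurable w2)
    [IsFiniteMeasure μm] {C2 : ℝ} (hb1 : ∀ x, |w x| ≤ C) (hb2 : ∀ x, |w2 x| ≤ C2) (q : ℝ) :
    Jp μm b w q - Jp μm b w2 q = ∫ x in Ico q b, (w x - w2 x) ∂μm := by
  rw [Jp, Jp, ← integral_sub (integrable_of_bound μm hw1 hb1).integrableOn
    (integrable_of_bound μm hw2 hb2).integrableOn]

end JBasic

end Stmt7Aux

namespace Stmt7Aux

section PhiPsi

variable {a b : ℝ} {lm lp gm gp : ℝ → ℝ} {μm μp : MeasureTheory.Measure ℝ}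

lemma lp_pos (hA3 : A3 a b lm lp) (hA6 : A6 a b lm lp) {x : ℝ} (hx : x ∈ Icc a b) :
    0 < lp x :=
  lt_of_lt_of_le hA6.1 (hA3.2.2.2.1 ⟨le_rfl, hx.1.trans hx.2⟩ hx hx.1)

lemma lm_pos (hA3 : A3 a b lm lp) (hA6 : A6 a b lm lp) {x : ℝ} (hx : x ∈ Icc a b) :
    0 < lm x :=
  lt_of_lt_of_le hA6.2 (hA3.2.2.1 hx ⟨hx.1.trans hx.2, le_rfl⟩ hx.2)

lemma continuous_lp_clf (hab : a ≤ b) (hA3 : A3 a b lm lp) :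
    Continuous (fun y => lp (clf a b y)) :=
  hA3.2.1.comp_continuous (clf_cont a b) (fun y => clf_mem hab y)

lemma continuous_lm_clf (hab : a ≤ b) (hA3 : A3 a b lm lp) :
    Continuous (fun y => lm (clf a b y)) :=
  hA3.1.comp_continuous (clf_cont a b) (fun y => clf_mem hab y)

lemma Jm_clf_sub (hab : a ≤ b) (hA3 : A3 a b lm lp) (hμp : IsMuPlus a b lp μp)
    [IsFiniteMeasure μp] {w : ℝ → ℝ} {C : ℝ}
    (hw : Measurable w) (hbw : ∀ x, |w x| ≤ C) {y x : ℝ} (hyx : y ≤ x) :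
    Jm μp a w (clf a b x) - Jm μp a w (clf a b y)
      = ∫ t in Ioc (clf a b y) (clf a b x), w t ∂μp := by
  set c1 := clf a b y
  set c2 := clf a b x
  have hc1 : c1 ∈ Icc a b := clf_mem hab y
  have hc12 : c1 ≤ c2 := clf_mono a b hyx
  have hsplit : (∫ t in Ioc a c2, w t ∂μp)
      = (∫ t in Ioc a c1, w t ∂μp) + ∫ t in Ioc c1 c2, w t ∂μp := by
    rw [← Set.Ioc_union_Ioc_eq_Ioc hc1.1 hc12,
      setIntegral_union
        (Disjoint.mono Set.Ioc_subset_Iic_self Set.Ioc_subset_Ioi_self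
          (Set.Iic_disjoint_Ioi le_rfl))
        measurableSet_Ioc (integrable_of_bound μp hw hbw).integrableOn
        (integrable_of_bound μp hw hbw).integrableOn]
  rw [Jm, Jm]
  linarith [hsplit]

lemma Jp_clf_sub (hab : a ≤ b) (hA3 : A3 a b lm lp) (hμm : IsMuMinus a b lm μm)
    [IsFiniteMeasure μm] {w : ℝ → ℝ} {C : ℝ}
    (hw : Measurable w) (hbw : ∀ x, |w x| ≤ C) {x y : ℝ} (hxy : x ≤ y) :
    Jp μm b w (clf a b x) - Jp μm b w (clf a b y)
      = ∫ t in Ico (clf a b x) (clf a b y), w t ∂μm := by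
  set c1 := clf a b x
  set c2 := clf a b y
  have hc2 : c2 ∈ Icc a b := clf_mem hab y
  have hc12 : c1 ≤ c2 := clf_mono a b hxy
  have hsplit : (∫ t in Ico c1 b, w t ∂μm)
      = (∫ t in Ico c1 c2, w t ∂μm) + ∫ t in Ico c2 b, w t ∂μm := by
    rw [← Set.Ico_union_Ico_eq_Ico hc12 hc2.2,
      setIntegral_union
        (Disjoint.mono Set.Ico_subset_Iio_self Set.Ico_subset_Ici_self
          (Set.Iio_disjoint_Ici le_rfl))
        measurableSet_Ico (integrable_of_bound μm hw hbw).integrableOn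
        (integrable_of_bound μm hw hbw).integrableOn]
  rw [Jp, Jp]
  linarith [hsplit]

lemma Jm_clf_leftCont (hab : a < b) (hA3 : A3 a b lm lp) (hμp : IsMuPlus a b lp μp)
    [IsFiniteMeasure μp] {w : ℝ → ℝ} {C : ℝ}
    (hw : Measurable w) (hbw : ∀ x, |w x| ≤ C) (hC0 : 0 ≤ C)
    {x : ℝ} (hx : x ∈ Ioc a b) :
    ContinuousWithinAt (fun m => Jm μp a w (clf a b m)) (Iio x) x := by
  have hxI : x ∈ Icc a b := ⟨hx.1.le, hx.2⟩
  apply tendsto_of_dist_le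
    (φ := fun y => C * (lp (clf a b x) - lp (clf a b y)))
  · filter_upwards [self_mem_nhdsWithin] with y (hy : y ∈ Iio x)
    have hc1 : clf a b y ∈ Icc a b := clf_mem hab.le y
    have hc2 : clf a b x ∈ Icc a b := clf_mem hab.le x
    have hc12 : clf a b y ≤ clf a b x := clf_mono a b hy.le
    rw [Real.dist_eq, abs_sub_comm, Jm_clf_sub hab.le hA3 hμp hw hbw hy.le]
    calc |∫ t in Ioc (clf a b y) (clf a b x), w t ∂μp|
        ≤ C * (μp (Ioc (clf a b y) (clf a b x))).toReal :=
          abs_setIntegral_le μp hw hbw _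
      _ = C * (lp (clf a b x) - lp (clf a b y)) := by
          rw [muP_Ioc hμp hc1.1 hc12 hc2.2
            (hA3.2.2.2.1 hc1 hc2 hc12) (hA3.2.2.2.2.2 _ hc1),
            ENNReal.toReal_ofReal (by linarith [hA3.2.2.2.1 hc1 hc2 hc12])]
  · have hcont := (continuous_lp_clf hab.le hA3).tendsto x
    have : Tendsto (fun y => C * (lp (clf a b x) - lp (clf a b y))) (𝓝 x)
        (𝓝 (C * (lp (clf a b x) - lp (clf a b x)))) :=
      (tendsto_const_nhds.sub hcont).const_mul C
    simpa using this.mono_left nhdsWithin_le_nhds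

lemma Jp_clf_rightCont (hab : a < b) (hA3 : A3 a b lm lp) (hμm : IsMuMinus a b lm μm)
    [IsFiniteMeasure μm] {w : ℝ → ℝ} {C : ℝ}
    (hw : Measurable w) (hbw : ∀ x, |w x| ≤ C) (hC0 : 0 ≤ C)
    {x : ℝ} (hx : x ∈ Ico a b) :
    ContinuousWithinAt (fun q => Jp μm b w (clf a b q)) (Ioi x) x := by
  have hxI : x ∈ Icc a b := ⟨hx.1, hx.2.le⟩
  apply tendsto_of_dist_le
    (φ := fun y => C * (lm (clf a b x) - lm (clf a b y)))
  · filter_upwards [self_mem_nhdsWithin] with y (hy : y ∈ Ioi x)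
    have hc1 : clf a b x ∈ Icc a b := clf_mem hab.le x
    have hc2 : clf a b y ∈ Icc a b := clf_mem hab.le y
    have hc12 : clf a b x ≤ clf a b y := clf_mono a b (le_of_lt hy)
    rw [Real.dist_eq, abs_sub_comm, Jp_clf_sub hab.le hA3 hμm hw hbw (le_of_lt hy)]
    calc |∫ t in Ico (clf a b x) (clf a b y), w t ∂μm|
        ≤ C * (μm (Ico (clf a b x) (clf a b y))).toReal :=
          abs_setIntegral_le μm hw hbw _
      _ = C * (lm (clf a b x) - lm (clf a b y)) := by
          rw [muM_Ico hμm hc1.1 hc12 hc2.2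
            (hA3.2.2.1 hc1 hc2 hc12) (hA3.2.2.2.2.1 _ hc2),
            ENNReal.toReal_ofReal (by linarith [hA3.2.2.1 hc1 hc2 hc12])]
  · have hcont := (continuous_lm_clf hab.le hA3).tendsto x
    have : Tendsto (fun y => C * (lm (clf a b x) - lm (clf a b y))) (𝓝 x)
        (𝓝 (C * (lm (clf a b x) - lm (clf a b x)))) :=
      (tendsto_const_nhds.sub hcont).const_mul C
    simpa using this.mono_left nhdsWithin_le_nhds

end PhiPsi

end Stmt7Aux

namespace Stmt7Aux

/-- The first half of the inverse map: recover `w₋` from `w₊`. -/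
def Phi (a b : ℝ) (gm lp : ℝ → ℝ) (μp : MeasureTheory.Measure ℝ) (w : ℝ → ℝ) : ℝ → ℝ :=
  fun m => (gm a - gm (clf a b m) - Jm μp a w (clf a b m)) / lp (clf a b m)

/-- The second half of the inverse map: recover `w₊` from `w₋`. -/
def Psi (a b : ℝ) (gp lm : ℝ → ℝ) (μm : MeasureTheory.Measure ℝ) (w : ℝ → ℝ) : ℝ → ℝ :=
  fun q => (gp b - gp (clf a b q) - Jp μm b w (clf a b q)) / lm (clf a b q)

section PhiPsi2

variable {a b : ℝ} {lm lp gm gp : ℝ → ℝ} {μm μp : MeasureTheory.Measure ℝ}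

lemma measurable_comp_clf (hab : a ≤ b) {f : ℝ → ℝ}
    (hf : BoundedVariationOn f (Icc a b)) :
    Measurable (fun x => f (clf a b x)) := by
  obtain ⟨p, q, hp, hq, hpq⟩ :=
    LocallyBoundedVariationOn.exists_monotoneOn_sub_monotoneOn
      (fun x y hx hy => hf.mono inter_subset_left)
  have : (fun x => f (clf a b x)) =
      (fun x => p (clf a b x)) - (fun x => q (clf a b x)) := by
    funext x; simp [hpq]
  rw [this]
  exact ((monotoneOn_comp_clf hab hp).measurable.sub
    (monotoneOn_comp_clf hab hq).measurable)

lemma measurable_Phi (hab : a < b) (hA3 : A3 a b lm lp)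
    (hgmBV : BoundedVariationOn gm (Icc a b)) [IsFiniteMeasure μp]
    {w : ℝ → ℝ} {C : ℝ} (hw : Measurable w) (hbw : ∀ x, |w x| ≤ C) :
    Measurable (Phi a b gm lp μp w) := by
  apply Measurable.div
  · exact (measurable_const.sub (measurable_comp_clf hab.le hgmBV)).sub
      ((measurable_Jm hw hbw).comp (clf_cont a b).measurable)
  · exact (continuous_lp_clf hab.le hA3).measurable

lemma measurable_Psi (hab : a < b) (hA3 : A3 a b lm lp)
    (hgpBV : BoundedVariationOn gp (Icc a b)) [IsFiniteMeasure μm]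
    {w : ℝ → ℝ} {C : ℝ} (hw : Measurable w) (hbw : ∀ x, |w x| ≤ C) :
    Measurable (Psi a b gp lm μm w) := by
  apply Measurable.div
  · exact (measurable_const.sub (measurable_comp_clf hab.le hgpBV)).sub
      ((measurable_Jp hw hbw).comp (clf_cont a b).measurable)
  · exact (continuous_lm_clf hab.le hA3).measurable

lemma bound_Phi (hab : a < b) (hA3 : A3 a b lm lp) (hA6 : A6 a b lm lp)
    [IsFiniteMeasure μp] {w : ℝ → ℝ} {C Cg : ℝ}
    (hw : Measurable w) (hbw : ∀ x, |w x| ≤ C)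
    (hgmB : ∀ x ∈ Icc a b, |gm x| ≤ Cg) :
    ∀ m, |Phi a b gm lp μp w m| ≤ (2 * Cg + C * (μp univ).toReal) / lp a := by
  intro m
  have ht : clf a b m ∈ Icc a b := clf_mem hab.le m
  have hl : 0 < lp (clf a b m) := lp_pos hA3 hA6 ht
  have hC0 : 0 ≤ C := (abs_nonneg _).trans (hbw 0)
  have hnum : |gm a - gm (clf a b m) - Jm μp a w (clf a b m)|
      ≤ 2 * Cg + C * (μp univ).toReal := by
    have h1 : |gm a| ≤ Cg := hgmB a ⟨le_rfl, hab.le⟩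
    have h2 : |gm (clf a b m)| ≤ Cg := hgmB _ ht
    have h3 : |Jm μp a w (clf a b m)| ≤ C * (μp univ).toReal := by
      refine (abs_Jm_le hw hbw _).trans ?_
      have := measure_mono (subset_univ (Ioc a (clf a b m))) (μ := μp)
      exact mul_le_mul_of_nonneg_left
        (ENNReal.toReal_mono (measure_ne_top μp univ) this) hC0
    calc |gm a - gm (clf a b m) - Jm μp a w (clf a b m)|
        ≤ |gm a| + |gm (clf a b m)| + |Jm μp a w (clf a b m)| := by
          refine (abs_sub _ _).trans ?_
          gcongr
          exact abs_sub _ _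
      _ ≤ 2 * Cg + C * (μp univ).toReal := by linarith
  have hCg0 : 0 ≤ Cg := (abs_nonneg _).trans (hgmB a ⟨le_rfl, hab.le⟩)
  rw [Phi, abs_div, abs_of_pos hl]
  exact div_le_div₀ (add_nonneg (by linarith) (mul_nonneg hC0 ENNReal.toReal_nonneg))
    hnum hA6.1
    (hA3.2.2.2.1 ⟨le_rfl, hab.le⟩ ht ht.1)

lemma bound_Psi (hab : a < b) (hA3 : A3 a b lm lp) (hA6 : A6 a b lm lp)
    [IsFiniteMeasure μm] {w : ℝ → ℝ} {C Cg : ℝ}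
    (hw : Measurable w) (hbw : ∀ x, |w x| ≤ C)
    (hgpB : ∀ x ∈ Icc a b, |gp x| ≤ Cg) :
    ∀ q, |Psi a b gp lm μm w q| ≤ (2 * Cg + C * (μm univ).toReal) / lm b := by
  intro q
  have ht : clf a b q ∈ Icc a b := clf_mem hab.le q
  have hl : 0 < lm (clf a b q) := lm_pos hA3 hA6 ht
  have hC0 : 0 ≤ C := (abs_nonneg _).trans (hbw 0)
  have hnum : |gp b - gp (clf a b q) - Jp μm b w (clf a b q)|
      ≤ 2 * Cg + C * (μm univ).toReal := by
    have h1 : |gp b| ≤ Cg := hgpB b ⟨hab.le, le_rfl⟩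
    have h2 : |gp (clf a b q)| ≤ Cg := hgpB _ ht
    have h3 : |Jp μm b w (clf a b q)| ≤ C * (μm univ).toReal := by
      refine (abs_Jp_le hw hbw _).trans ?_
      have := measure_mono (subset_univ (Ico (clf a b q) b)) (μ := μm)
      exact mul_le_mul_of_nonneg_left
        (ENNReal.toReal_mono (measure_ne_top μm univ) this) hC0
    calc |gp b - gp (clf a b q) - Jp μm b w (clf a b q)|
        ≤ |gp b| + |gp (clf a b q)| + |Jp μm b w (clf a b q)| := by
          refine (abs_sub _ _).trans ?_
          gcongr
          exact abs_sub _ _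
      _ ≤ 2 * Cg + C * (μm univ).toReal := by linarith
  have hCg0 : 0 ≤ Cg := (abs_nonneg _).trans (hgpB b ⟨hab.le, le_rfl⟩)
  rw [Psi, abs_div, abs_of_pos hl]
  exact div_le_div₀ (add_nonneg (by linarith) (mul_nonneg hC0 ENNReal.toReal_nonneg))
    hnum hA6.2
    (hA3.2.2.1 ht ⟨hab.le, le_rfl⟩ ht.2)

lemma Phi_lip (hab : a < b) (hA3 : A3 a b lm lp) (hA6 : A6 a b lm lp)
    (hμp : IsMuPlus a b lp μp) [IsFiniteMeasure μp]
    {w1 w2 : ℝ → ℝ} {C1 C2 D : ℝ}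
    (hw1 : Measurable w1) (hw2 : Measurable w2)
    (hb1 : ∀ x, |w1 x| ≤ C1) (hb2 : ∀ x, |w2 x| ≤ C2)
    (hD : ∀ x, |w1 x - w2 x| ≤ D) (hD0 : 0 ≤ D) (m : ℝ) :
    |Phi a b gm lp μp w1 m - Phi a b gm lp μp w2 m| ≤ (1 - lp a / lp b) * D := by
  set t := clf a b m with htdef
  have ht : t ∈ Icc a b := clf_mem hab.le m
  have hlt : 0 < lp t := lp_pos hA3 hA6 ht
  have hlb : 0 < lp b := lp_pos hA3 hA6 ⟨hab.le, le_rfl⟩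
  have hla : 0 < lp a := hA6.1
  have hltb : lp t ≤ lp b := hA3.2.2.2.1 ht ⟨hab.le, le_rfl⟩ ht.2
  have hlat : lp a ≤ lp t := hA3.2.2.2.1 ⟨le_rfl, hab.le⟩ ht ht.1
  have hdiff : Phi a b gm lp μp w1 m - Phi a b gm lp μp w2 m
      = (Jm μp a w2 t - Jm μp a w1 t) / lp t := by
    rw [Phi, Phi, div_sub_div_same]
    ring_nf
    rw [htdef]; ring
  have hJ : |Jm μp a w2 t - Jm μp a w1 t| ≤ D * (lp t - lp a) := by
    rw [Jm_sub hw2 hw1 hb2 hb1]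
    refine (abs_setIntegral_le μp (hw2.sub hw1) (fun x => by
      rw [Pi.sub_apply, abs_sub_comm]; exact hD x) _).trans ?_
    rw [muP_Ioc hμp le_rfl ht.1 ht.2 hlat hla.le]
    exact le_of_eq (by rw [ENNReal.toReal_ofReal (by linarith)])
  rw [hdiff, abs_div, abs_of_pos hlt]
  rw [div_le_iff₀ hlt]
  have h1 : lp a / lp b * lp t ≤ lp a := by
    rw [div_mul_eq_mul_div, div_le_iff₀ hlb]
    exact mul_le_mul_of_nonneg_left hltb hla.le
  nlinarith [mul_le_mul_of_nonneg_left h1 hD0]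

lemma Psi_lip (hab : a < b) (hA3 : A3 a b lm lp) (hA6 : A6 a b lm lp)
    (hμm : IsMuMinus a b lm μm) [IsFiniteMeasure μm]
    {w1 w2 : ℝ → ℝ} {C1 C2 D : ℝ}
    (hw1 : Measurable w1) (hw2 : Measurable w2)
    (hb1 : ∀ x, |w1 x| ≤ C1) (hb2 : ∀ x, |w2 x| ≤ C2)
    (hD : ∀ x, |w1 x - w2 x| ≤ D) (hD0 : 0 ≤ D) (q : ℝ) :
    |Psi a b gp lm μm w1 q - Psi a b gp lm μm w2 q| ≤ (1 - lm b / lm a) * D := by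
  set t := clf a b q with htdef
  have ht : t ∈ Icc a b := clf_mem hab.le q
  have hlt : 0 < lm t := lm_pos hA3 hA6 ht
  have hla : 0 < lm a := lm_pos hA3 hA6 ⟨le_rfl, hab.le⟩
  have hlb : 0 < lm b := hA6.2
  have hlta : lm t ≤ lm a := hA3.2.2.1 ⟨le_rfl, hab.le⟩ ht ht.1
  have hlbt : lm b ≤ lm t := hA3.2.2.1 ht ⟨hab.le, le_rfl⟩ ht.2
  have hdiff : Psi a b gp lm μm w1 q - Psi a b gp lm μm w2 q
      = (Jp μm b w2 t - Jp μm b w1 t) / lm t := by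
    rw [Psi, Psi, div_sub_div_same]
    ring_nf
    rw [htdef]; ring
  have hJ : |Jp μm b w2 t - Jp μm b w1 t| ≤ D * (lm t - lm b) := by
    rw [Jp_sub hw2 hw1 hb2 hb1]
    refine (abs_setIntegral_le μm (hw2.sub hw1) (fun x => by
      rw [Pi.sub_apply, abs_sub_comm]; exact hD x) _).trans ?_
    rw [muM_Ico hμm ht.1 ht.2 le_rfl hlbt hlb.le]
    exact le_of_eq (by rw [ENNReal.toReal_ofReal (by linarith)])
  rw [hdiff, abs_div, abs_of_pos hlt]
  rw [div_le_iff₀ hlt]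
  have h1 : lm b / lm a * lm t ≤ lm b := by
    rw [div_mul_eq_mul_div, div_le_iff₀ hla]
    exact mul_le_mul_of_nonneg_left hlta hlb.le
  nlinarith [mul_le_mul_of_nonneg_left h1 hD0]

end PhiPsi2

end Stmt7Aux

namespace Stmt7Aux

/-- Picard iteration for the fixed point equation `w = Psi (Phi w)`. -/
def iterW (a b : ℝ) (gm gp lm lp : ℝ → ℝ) (μm μp : MeasureTheory.Measure ℝ) :
    ℕ → ℝ → ℝ
  | 0 => fun _ => 0
  | n+1 => Psi a b gp lm μm (Phi a b gm lp μp (iterW a b gm gp lm lp μm μp n))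

section Construction

variable {a b : ℝ} {lm lp gm gp : ℝ → ℝ} {μm μp : MeasureTheory.Measure ℝ}

lemma Phi_at_a (hab : a < b) (w : ℝ → ℝ) : Phi a b gm lp μp w a = 0 := by
  have h : clf a b a = a := clf_of_mem ⟨le_rfl, hab.le⟩
  rw [Phi, h, Jm]
  simp

lemma Psi_at_b (hab : a < b) (w : ℝ → ℝ) : Psi a b gp lm μm w b = 0 := by
  have h : clf a b b = b := clf_of_mem ⟨hab.le, le_rfl⟩
  rw [Psi, h, Jp]
  simp

lemma Phi_eq (hA3 : A3 a b lm lp) (hA6 : A6 a b lm lp) (w : ℝ → ℝ)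
    {m : ℝ} (hm : m ∈ Icc a b) :
    Phi a b gm lp μp w m * lp m = gm a - gm m - Jm μp a w m := by
  rw [Phi, clf_of_mem hm, div_mul_cancel₀ _ (lp_pos hA3 hA6 hm).ne']

lemma Psi_eq (hA3 : A3 a b lm lp) (hA6 : A6 a b lm lp) (w : ℝ → ℝ)
    {q : ℝ} (hq : q ∈ Icc a b) :
    Psi a b gp lm μm w q * lm q = gp b - gp q - Jp μm b w q := by
  rw [Psi, clf_of_mem hq, div_mul_cancel₀ _ (lm_pos hA3 hA6 hq).ne']

lemma exists_solution (hab : a < b) (hA3 : A3 a b lm lp) (hA6 : A6 a b lm lp)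
    (hμm : IsMuMinus a b lm μm) (hμp : IsMuPlus a b lp μp)
    {Cgm Cgp : ℝ}
    (hgmB : ∀ x ∈ Icc a b, |gm x| ≤ Cgm) (hgpB : ∀ x ∈ Icc a b, |gp x| ≤ Cgp)
    (hgmBV : BoundedVariationOn gm (Icc a b))
    (hgpBV : BoundedVariationOn gp (Icc a b)) :
    ∃ wm wp : ℝ → ℝ, Measurable wm ∧ Measurable wp ∧
      (∃ C, (∀ x, |wm x| ≤ C) ∧ (∀ x, |wp x| ≤ C)) ∧
      wm = Phi a b gm lp μp wp ∧ wp = Psi a b gp lm μm wm := by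
  haveI : IsFiniteMeasure μm := isFiniteMeasure_muM hab.le hμm
  haveI : IsFiniteMeasure μp := isFiniteMeasure_muP hab.le hμp
  set P : ℕ → ℝ → ℝ := iterW a b gm gp lm lp μm μp with hP
  set ρ1 : ℝ := 1 - lp a / lp b with hρ1def
  set ρ2 : ℝ := 1 - lm b / lm a with hρ2def
  set ρ : ℝ := ρ2 * ρ1 with hρdef
  have hlpa : 0 < lp a := hA6.1
  have hlpb : 0 < lp b := lp_pos hA3 hA6 ⟨hab.le, le_rfl⟩
  have hlma : 0 < lm a := lm_pos hA3 hA6 ⟨le_rfl, hab.le⟩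
  have hlmb : 0 < lm b := hA6.2
  have hlpab : lp a ≤ lp b := hA3.2.2.2.1 ⟨le_rfl, hab.le⟩ ⟨hab.le, le_rfl⟩ hab.le
  have hlmba : lm b ≤ lm a := hA3.2.2.1 ⟨le_rfl, hab.le⟩ ⟨hab.le, le_rfl⟩ hab.le
  have hρ10 : 0 ≤ ρ1 := by
    rw [hρ1def, sub_nonneg, div_le_one hlpb]; exact hlpab
  have hρ11 : ρ1 < 1 := by
    rw [hρ1def]; have : 0 < lp a / lp b := div_pos hlpa hlpb; linarith
  have hρ20 : 0 ≤ ρ2 := by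
    rw [hρ2def, sub_nonneg, div_le_one hlma]; exact hlmba
  have hρ21 : ρ2 < 1 := by
    rw [hρ2def]; have : 0 < lm b / lm a := div_pos hlmb hlma; linarith
  have hρ0 : 0 ≤ ρ := mul_nonneg hρ20 hρ10
  have hρ1 : ρ < 1 := by nlinarith
  -- each iterate is measurable and bounded
  have good : ∀ n, Measurable (P n) ∧ ∃ C, ∀ x, |P n x| ≤ C := by
    intro n
    induction n with
    | zero =>
      refine ⟨measurable_const, 0, fun x => ?_⟩
      show |(0 : ℝ)| ≤ 0
      simp
    | succ n ih =>
      obtain ⟨hmeas, C, hbC⟩ := ih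
      refine ⟨measurable_Psi hab hA3 hgpBV
        (measurable_Phi hab hA3 hgmBV hmeas hbC)
        (bound_Phi hab hA3 hA6 hmeas hbC hgmB), _,
        bound_Psi hab hA3 hA6 (measurable_Phi hab hA3 hgmBV hmeas hbC)
          (bound_Phi hab hA3 hA6 hmeas hbC hgmB) hgpB⟩
  -- uniform geometric bound for increments
  obtain ⟨C1, hC1⟩ := (good 1).2
  set E : ℝ := max C1 0 with hEdef
  have hE0 : 0 ≤ E := le_max_right _ _
  have hd : ∀ n x, |P (n+1) x - P n x| ≤ E * ρ ^ n := by
    intro n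
    induction n with
    | zero =>
      intro x
      have : P 0 x = 0 := rfl
      rw [this, sub_zero, pow_zero, mul_one]
      exact (hC1 x).trans (le_max_left _ _)
    | succ n ih =>
      intro x
      have hrw1 : P (n+2) = Psi a b gp lm μm (Phi a b gm lp μp (P (n+1))) := rfl
      have hrw2 : P (n+1) = Psi a b gp lm μm (Phi a b gm lp μp (P n)) := rfl
      obtain ⟨hm1, C1', hb1⟩ := good (n+1)
      obtain ⟨hm2, C2', hb2⟩ := good n
      have hD0 : (0:ℝ) ≤ E * ρ ^ n := mul_nonneg hE0 (pow_nonneg hρ0 n)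
      have hphi := Phi_lip (gm := gm) hab hA3 hA6 hμp hm1 hm2 hb1 hb2 ih hD0
      have hpsi := Psi_lip (gp := gp) hab hA3 hA6 hμm
        (measurable_Phi hab hA3 hgmBV hm1 hb1)
        (measurable_Phi hab hA3 hgmBV hm2 hb2)
        (bound_Phi hab hA3 hA6 hm1 hb1 hgmB)
        (bound_Phi hab hA3 hA6 hm2 hb2 hgmB)
        hphi (mul_nonneg hρ10 hD0) x
      rw [hrw1, hrw2]
      refine hpsi.trans (le_of_eq ?_)
      rw [hρdef]; ring
  -- summability and definition of the limit
  have hgeom : Summable (fun n : ℕ => E * ρ ^ n) :=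
    (summable_geometric_of_lt_one hρ0 hρ1).mul_left E
  have hsum : ∀ x, Summable (fun n => P (n+1) x - P n x) := by
    intro x
    refine summable_abs_iff.mp ?_
    exact Summable.of_nonneg_of_le (fun n => abs_nonneg _) (fun n => hd n x) hgeom
  set wp : ℝ → ℝ := fun x => ∑' n, (P (n+1) x - P n x) with hwpdef
  have htend : ∀ x, Tendsto (fun n => P n x) atTop (𝓝 (wp x)) := by
    intro x
    have h1 := (hsum x).hasSum.tendsto_sum_nat
    have h2 : ∀ n, (∑ i ∈ Finset.range n, (P (i+1) x - P i x)) = P n x := by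
      intro n
      rw [Finset.sum_range_sub (fun i => P i x)]
      show P n x - P 0 x = P n x
      have : P 0 x = 0 := rfl
      rw [this, sub_zero]
    simp only [h2] at h1
    exact h1
  -- tail estimate
  have htail : ∀ n x, |wp x - P n x| ≤ E * ρ ^ n / (1 - ρ) := by
    intro n x
    have hT : Tendsto (fun N => |P N x - P n x|) atTop (𝓝 (|wp x - P n x|)) :=
      ((htend x).sub_const _).abs
    refine le_of_tendsto hT ?_
    filter_upwards [eventually_ge_atTop n] with N hN
    have htel : P N x - P n x = ∑ i ∈ Finset.Ico n N, (P (i+1) x - P i x) := by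
      rw [Finset.sum_Ico_eq_sub _ hN, Finset.sum_range_sub (fun i => P i x),
        Finset.sum_range_sub (fun i => P i x)]
      ring
    rw [htel]
    calc |∑ i ∈ Finset.Ico n N, (P (i+1) x - P i x)|
        ≤ ∑ i ∈ Finset.Ico n N, |P (i+1) x - P i x| :=
          Finset.abs_sum_le_sum_abs _ _
      _ ≤ ∑ i ∈ Finset.Ico n N, E * ρ ^ i :=
          Finset.sum_le_sum (fun i _ => hd i x)
      _ = E * ∑ i ∈ Finset.Ico n N, ρ ^ i := by rw [Finset.mul_sum]
      _ ≤ E * (ρ ^ n / (1 - ρ)) := by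
          exact mul_le_mul_of_nonneg_left
            (geom_sum_Ico_le_of_lt_one hρ0 hρ1) hE0
      _ = E * ρ ^ n / (1 - ρ) := by ring
  have hbwp : ∀ x, |wp x| ≤ E / (1 - ρ) := by
    intro x
    have := htail 0 x
    have h0 : P 0 x = 0 := rfl
    rw [h0, sub_zero, pow_zero] at this
    simpa using this
  have hwpMeas : Measurable wp :=
    measurable_of_tendsto_metrizable (fun n => (good n).1)
      (tendsto_pi_nhds.mpr htend)
  -- the fixed point equation
  have hfix : wp = Psi a b gp lm μm (Phi a b gm lp μp wp) := by
    funext x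
    have hL : Tendsto (fun n => P (n+1) x) atTop (𝓝 (wp x)) :=
      (htend x).comp (tendsto_add_atTop_nat 1)
    have hR : Tendsto (fun n => P (n+1) x) atTop
        (𝓝 (Psi a b gp lm μm (Phi a b gm lp μp wp) x)) := by
      apply tendsto_of_dist_le
        (φ := fun n => ρ2 * (ρ1 * (E * ρ ^ n / (1 - ρ))))
      · filter_upwards with n
        obtain ⟨hmn, Cn, hbn⟩ := good n
        have hD0 : (0:ℝ) ≤ E * ρ ^ n / (1 - ρ) :=
          div_nonneg (mul_nonneg hE0 (pow_nonneg hρ0 n)) (by linarith)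
        have hdiff : ∀ y, |P n y - wp y| ≤ E * ρ ^ n / (1 - ρ) := by
          intro y
          rw [abs_sub_comm]
          exact htail n y
        have hphi := Phi_lip (gm := gm) hab hA3 hA6 hμp hmn hwpMeas hbn hbwp
          hdiff hD0
        have hpsi := Psi_lip (gp := gp) hab hA3 hA6 hμm
          (measurable_Phi hab hA3 hgmBV hmn hbn)
          (measurable_Phi hab hA3 hgmBV hwpMeas hbwp)
          (bound_Phi hab hA3 hA6 hmn hbn hgmB)
          (bound_Phi hab hA3 hA6 hwpMeas hbwp hgmB)
          hphi (mul_nonneg hρ10 hD0) x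
        rw [Real.dist_eq]
        exact hpsi
      · have hgeo : Tendsto (fun n : ℕ => ρ ^ n) atTop (𝓝 0) :=
          tendsto_pow_atTop_nhds_zero_of_lt_one hρ0 hρ1
        have : Tendsto (fun n : ℕ => ρ2 * (ρ1 * (E * ρ ^ n / (1 - ρ)))) atTop
            (𝓝 (ρ2 * (ρ1 * (E * 0 / (1 - ρ))))) := by
          apply Tendsto.const_mul
          apply Tendsto.const_mul
          exact (hgeo.const_mul E).div_const _
        simpa using this
    exact tendsto_nhds_unique hL hR
  refine ⟨Phi a b gm lp μp wp, wp, ?_, hwpMeas, ?_, rfl, ?_⟩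
  · exact measurable_Phi hab hA3 hgmBV hwpMeas hbwp
  · refine ⟨max ((2 * Cgm + (E / (1-ρ)) * (μp univ).toReal) / lp a) (E / (1-ρ)),
      fun x => ?_, fun x => ?_⟩
    · exact (bound_Phi hab hA3 hA6 hwpMeas hbwp hgmB x).trans (le_max_left _ _)
    · exact (hbwp x).trans (le_max_right _ _)
  · exact hfix

end Construction

end Stmt7Aux

namespace Stmt7Aux

section Regularity

variable {a b : ℝ} {lm lp gm gp : ℝ → ℝ} {μm μp : MeasureTheory.Measure ℝ}

lemma bvOn_congr {f g : ℝ → ℝ} {s : Set ℝ} (h : EqOn f g s)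
    (hf : BoundedVariationOn f s) : BoundedVariationOn g s := by
  rwa [BoundedVariationOn, ← eVariationOn.eq_of_eqOn h]

lemma bvOn_invlp (hab : a < b) (hA3 : A3 a b lm lp) (hA6 : A6 a b lm lp) :
    BoundedVariationOn (fun m => (lp m)⁻¹) (Icc a b) := by
  apply antitoneOn_bvOn
  intro x hx y hy hxy
  exact inv_anti₀ (lp_pos hA3 hA6 hx) (hA3.2.2.2.1 hx hy hxy)

lemma bvOn_invlm (hab : a < b) (hA3 : A3 a b lm lp) (hA6 : A6 a b lm lp) :
    BoundedVariationOn (fun q => (lm q)⁻¹) (Icc a b) := by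
  have : MonotoneOn (fun q => (lm q)⁻¹) (Icc a b) := by
    intro x hx y hy hxy
    exact inv_anti₀ (lm_pos hA3 hA6 hy) (hA3.2.2.1 hx hy hxy)
  exact monotoneOn_bvOn this

lemma bvOn_Phi (hab : a < b) (hA3 : A3 a b lm lp) (hA6 : A6 a b lm lp)
    [IsFiniteMeasure μp] {w : ℝ → ℝ} {C Cg : ℝ}
    (hw : Measurable w) (hbw : ∀ x, |w x| ≤ C)
    (hgmB : ∀ x ∈ Icc a b, |gm x| ≤ Cg)
    (hgmBV : BoundedVariationOn gm (Icc a b)) :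
    BoundedVariationOn (Phi a b gm lp μp w) (Icc a b) := by
  have hC0 : 0 ≤ C := (abs_nonneg _).trans (hbw 0)
  set N : ℝ → ℝ := fun m => gm a - gm m - Jm μp a w m with hN
  have hNbv : BoundedVariationOn N (Icc a b) := by
    have h1 : BoundedVariationOn (fun m : ℝ => gm a - gm m) (Icc a b) := by
      have := bvOn_add (bvOn_const (c := gm a) (s := Icc a b)) (bvOn_neg hgmBV)
      simpa [sub_eq_add_neg] using this
    have := bvOn_add h1 (bvOn_neg (bvOn_Jm (μp := μp) (a := a) (b := b) hw hbw))
    simpa [sub_eq_add_neg, hN] using this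
  have hNbd : ∀ m ∈ Icc a b, |N m| ≤ 2 * Cg + C * (μp univ).toReal := by
    intro m hm
    have h1 : |gm a| ≤ Cg := hgmB a ⟨le_rfl, hab.le⟩
    have h2 : |gm m| ≤ Cg := hgmB m hm
    have h3 : |Jm μp a w m| ≤ C * (μp univ).toReal := by
      refine (abs_Jm_le hw hbw _).trans ?_
      exact mul_le_mul_of_nonneg_left
        (ENNReal.toReal_mono (measure_ne_top μp univ)
          (measure_mono (subset_univ _))) hC0
    calc |N m| ≤ |gm a| + |gm m| + |Jm μp a w m| := by
          rw [hN]
          refine (abs_sub _ _).trans ?_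
          gcongr
          exact abs_sub _ _
      _ ≤ 2 * Cg + C * (μp univ).toReal := by linarith
  have hIbd : ∀ m ∈ Icc a b, |(lp m)⁻¹| ≤ (lp a)⁻¹ := by
    intro m hm
    rw [abs_of_pos (inv_pos.mpr (lp_pos hA3 hA6 hm))]
    exact inv_anti₀ hA6.1 (hA3.2.2.2.1 ⟨le_rfl, hab.le⟩ hm hm.1)
  have hmul := bvOn_mul hNbv (bvOn_invlp hab hA3 hA6) hNbd hIbd
  apply bvOn_congr (f := fun m => N m * (lp m)⁻¹) _ hmul
  intro m hm
  show N m * (lp m)⁻¹ = Phi a b gm lp μp w m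
  rw [Phi, clf_of_mem hm, div_eq_mul_inv]

lemma bvOn_Psi (hab : a < b) (hA3 : A3 a b lm lp) (hA6 : A6 a b lm lp)
    [IsFiniteMeasure μm] {w : ℝ → ℝ} {C Cg : ℝ}
    (hw : Measurable w) (hbw : ∀ x, |w x| ≤ C)
    (hgpB : ∀ x ∈ Icc a b, |gp x| ≤ Cg)
    (hgpBV : BoundedVariationOn gp (Icc a b)) :
    BoundedVariationOn (Psi a b gp lm μm w) (Icc a b) := by
  have hC0 : 0 ≤ C := (abs_nonneg _).trans (hbw 0)
  set N : ℝ → ℝ := fun q => gp b - gp q - Jp μm b w q with hN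
  have hNbv : BoundedVariationOn N (Icc a b) := by
    have h1 : BoundedVariationOn (fun q : ℝ => gp b - gp q) (Icc a b) := by
      have := bvOn_add (bvOn_const (c := gp b) (s := Icc a b)) (bvOn_neg hgpBV)
      simpa [sub_eq_add_neg] using this
    have := bvOn_add h1 (bvOn_neg (bvOn_Jp (μm := μm) (a := a) (b := b) hw hbw))
    simpa [sub_eq_add_neg, hN] using this
  have hNbd : ∀ q ∈ Icc a b, |N q| ≤ 2 * Cg + C * (μm univ).toReal := by
    intro q hq
    have h1 : |gp b| ≤ Cg := hgpB b ⟨hab.le, le_rfl⟩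
    have h2 : |gp q| ≤ Cg := hgpB q hq
    have h3 : |Jp μm b w q| ≤ C * (μm univ).toReal := by
      refine (abs_Jp_le hw hbw _).trans ?_
      exact mul_le_mul_of_nonneg_left
        (ENNReal.toReal_mono (measure_ne_top μm univ)
          (measure_mono (subset_univ _))) hC0
    calc |N q| ≤ |gp b| + |gp q| + |Jp μm b w q| := by
          rw [hN]
          refine (abs_sub _ _).trans ?_
          gcongr
          exact abs_sub _ _
      _ ≤ 2 * Cg + C * (μm univ).toReal := by linarith
  have hIbd : ∀ q ∈ Icc a b, |(lm q)⁻¹| ≤ (lm b)⁻¹ := by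
    intro q hq
    rw [abs_of_pos (inv_pos.mpr (lm_pos hA3 hA6 hq))]
    exact inv_anti₀ hA6.2 (hA3.2.2.1 hq ⟨hab.le, le_rfl⟩ hq.2)
  have hmul := bvOn_mul hNbv (bvOn_invlm hab hA3 hA6) hNbd hIbd
  apply bvOn_congr (f := fun q => N q * (lm q)⁻¹) _ hmul
  intro q hq
  show N q * (lm q)⁻¹ = Psi a b gp lm μm w q
  rw [Psi, clf_of_mem hq, div_eq_mul_inv]

lemma clf_mapsTo_Iio {x : ℝ} (hax : a < x) : MapsTo (clf a b) (Iio x) (Iio x) := by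
  intro y hy
  simp only [mem_Iio] at *
  exact max_lt hax (lt_of_le_of_lt (min_le_right b y) hy)

lemma clf_mapsTo_Ioi {x : ℝ} (hxb : x < b) : MapsTo (clf a b) (Ioi x) (Ioi x) := by
  intro y hy
  simp only [mem_Ioi] at *
  exact lt_of_lt_of_le (lt_min hxb hy) (le_max_right a (min b y))

lemma Phi_leftCont (hab : a < b) (hA3 : A3 a b lm lp) (hA6 : A6 a b lm lp)
    (hμp : IsMuPlus a b lp μp) [IsFiniteMeasure μp] {w : ℝ → ℝ} {C : ℝ}
    (hw : Measurable w) (hbw : ∀ x, |w x| ≤ C)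
    (hgmL : ∀ x ∈ Ioc a b, ContinuousWithinAt gm (Iio x) x)
    {x : ℝ} (hx : x ∈ Ioc a b) :
    ContinuousWithinAt (Phi a b gm lp μp w) (Iio x) x := by
  have hxI : x ∈ Icc a b := ⟨hx.1.le, hx.2⟩
  have hclfx : clf a b x = x := clf_of_mem hxI
  have hC0 : 0 ≤ C := (abs_nonneg _).trans (hbw 0)
  have h1 : ContinuousWithinAt (fun m => gm (clf a b m)) (Iio x) x := by
    have := ContinuousWithinAt.comp (f := clf a b) (g := gm)
      (by rw [hclfx]; exact hgmL x hx)
      ((clf_cont a b).continuousWithinAt) (clf_mapsTo_Iio hx.1)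
    exact this
  have h2 : ContinuousWithinAt (fun m => Jm μp a w (clf a b m)) (Iio x) x :=
    Jm_clf_leftCont hab hA3 hμp hw hbw hC0 hx
  have h3 : ContinuousWithinAt (fun m => lp (clf a b m)) (Iio x) x :=
    ((continuous_lp_clf hab.le hA3).continuousAt).continuousWithinAt
  have h4 : lp (clf a b x) ≠ 0 := by
    rw [hclfx]; exact (lp_pos hA3 hA6 hxI).ne'
  exact ((continuousWithinAt_const.sub h1).sub h2).div h3 h4

lemma Psi_rightCont (hab : a < b) (hA3 : A3 a b lm lp) (hA6 : A6 a b lm lp)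
    (hμm : IsMuMinus a b lm μm) [IsFiniteMeasure μm] {w : ℝ → ℝ} {C : ℝ}
    (hw : Measurable w) (hbw : ∀ x, |w x| ≤ C)
    (hgpR : ∀ x ∈ Ico a b, ContinuousWithinAt gp (Ioi x) x)
    {x : ℝ} (hx : x ∈ Ico a b) :
    ContinuousWithinAt (Psi a b gp lm μm w) (Ioi x) x := by
  have hxI : x ∈ Icc a b := ⟨hx.1, hx.2.le⟩
  have hclfx : clf a b x = x := clf_of_mem hxI
  have hC0 : 0 ≤ C := (abs_nonneg _).trans (hbw 0)
  have h1 : ContinuousWithinAt (fun q => gp (clf a b q)) (Ioi x) x := by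
    have := ContinuousWithinAt.comp (f := clf a b) (g := gp)
      (by rw [hclfx]; exact hgpR x hx)
      ((clf_cont a b).continuousWithinAt) (clf_mapsTo_Ioi hx.2)
    exact this
  have h2 : ContinuousWithinAt (fun q => Jp μm b w (clf a b q)) (Ioi x) x :=
    Jp_clf_rightCont hab hA3 hμm hw hbw hC0 hx
  have h3 : ContinuousWithinAt (fun q => lm (clf a b q)) (Ioi x) x :=
    ((continuous_lm_clf hab.le hA3).continuousAt).continuousWithinAt
  have h4 : lm (clf a b x) ≠ 0 := by
    rw [hclfx]; exact (lm_pos hA3 hA6 hxI).ne'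
  exact ((continuousWithinAt_const.sub h1).sub h2).div h3 h4

end Regularity

end Stmt7Aux

namespace Stmt7Aux

section Identity

variable {a b : ℝ} {lm lp gm gp : ℝ → ℝ} {μm μp : MeasureTheory.Measure ℝ}

lemma config_empty (hab : a < b) : IsConfig a b ⟨0, 0⟩ := by
  refine ⟨?_, ?_, ?_⟩ <;> intro x hx <;> simp at hx

lemma config_single_minus {m : ℝ} (hm : m ∈ Ioo a b) :
    IsConfig a b ⟨{m}, 0⟩ := by
  refine ⟨?_, ?_, ?_⟩
  · intro x hx
    rw [Multiset.mem_singleton] at hx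
    subst hx; exact hm
  · intro x hx; simp at hx
  · intro x _ y hy; simp at hy

lemma config_single_plus {q : ℝ} (hq : q ∈ Ioo a b) :
    IsConfig a b ⟨0, {q}⟩ := by
  refine ⟨?_, ?_, ?_⟩
  · intro x hx; simp at hx
  · intro x hx
    rw [Multiset.mem_singleton] at hx
    subst hx; exact hq
  · intro x hx; simp at hx

lemma Mminus_empty : Mminus a (⟨0, 0⟩ : OrderBook) = a := Mminus_of_eq rfl

lemma Mplus_empty : Mplus b (⟨0, 0⟩ : OrderBook) = b := Mplus_of_eq rfl

lemma Mminus_single {m : ℝ} (ham : a ≤ m) (t : Multiset ℝ) :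
    Mminus a (⟨{m}, t⟩ : OrderBook) = m := by
  rw [Mminus]
  have h1 : ({x | x ∈ (⟨{m}, t⟩ : OrderBook).minus} : Set ℝ) = {m} := by
    ext x; simp [Multiset.mem_singleton]
  rw [h1]
  have : (insert a {m} : Set ℝ) = {a, m} := rfl
  rw [this, csSup_pair]
  exact max_eq_right ham

lemma Mplus_single {q : ℝ} (hqb : q ≤ b) (s : Multiset ℝ) :
    Mplus b (⟨s, {q}⟩ : OrderBook) = q := by
  rw [Mplus]
  have h1 : ({x | x ∈ (⟨s, {q}⟩ : OrderBook).plus} : Set ℝ) = {q} := by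
    ext x; simp [Multiset.mem_singleton]
  rw [h1]
  have : (insert b {q} : Set ℝ) = {b, q} := rfl
  rw [this, csInf_pair]
  exact min_eq_right hqb

/-- The key computation: if the pair `(Wm, Wp)` satisfies the system of integral
equations, then the generator applied to the linear functional produces
`gm (M₋ X) + gp (M₊ X) - c`. -/
lemma genOp_identity (hab : a < b) (hA3 : A3 a b lm lp)
    (hμm : IsMuMinus a b lm μm) (hμp : IsMuPlus a b lp μp)
    {Wm Wp : ℝ → ℝ} {C : ℝ}
    (hWm : Measurable Wm) (hWp : Measurable Wp)
    (hbm : ∀ x, |Wm x| ≤ C) (hbp : ∀ x, |Wp x| ≤ C)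
    (hwma : Wm a = 0) (hwpb : Wp b = 0)
    (hEq1 : ∀ m ∈ Icc a b, Wm m * lp m = gm a - gm m - Jm μp a Wp m)
    (hEq2 : ∀ q ∈ Icc a b, Wp q * lm q = gp b - gp q - Jp μm b Wm q)
    {X : OrderBook} (hX : IsConfig a b X) :
    genOp a b μm μp (linF Wm Wp) X = gm (Mminus a X) + gp (Mplus b X) -
      (gm a + gp b - (∫ x in Ioo a b, Wm x ∂μm) - (∫ x in Ioo a b, Wp x ∂μp)) := by
  rw [genOp_master hab hA3 hμm hμp hWm hWp hbm hbp hwma hwpb hX]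
  have hq : Mplus b X ∈ Ioc a b := Mplus_mem_Ioc hab hX
  have hm : Mminus a X ∈ Ico a b := Mminus_mem_Ico hab hX
  have h1 := hEq1 (Mminus a X) ⟨hm.1, hm.2.le⟩
  have h2 := hEq2 (Mplus b X) ⟨hq.1.le, hq.2⟩
  have e1 : Jm μp a Wp (Mminus a X) = ∫ x in Ioc a (Mminus a X), Wp x ∂μp := rfl
  have e2 : Jp μm b Wm (Mplus b X) = ∫ x in Ico (Mplus b X) b, Wm x ∂μm := rfl
  rw [e1] at h1
  rw [e2] at h2
  linarith

lemma Lminus_mem_Ioo {u : ℝ} {X : OrderBook} (hX : IsConfig a b X) :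
    (∀ x ∈ (Lminus a b u X).minus, x ∈ Ioo a b) ∧
      (∀ x ∈ (Lminus a b u X).plus, x ∈ Ioo a b) := by
  rw [Lminus]
  split_ifs with h1 h2
  · exact ⟨hX.1, fun x hx => hX.2.1 x (Multiset.mem_of_mem_erase hx)⟩
  · constructor
    · intro x hx
      rcases Multiset.mem_cons.mp hx with h | h
      · subst h; exact h2
      · exact hX.1 x h
    · exact hX.2.1
  · exact ⟨hX.1, hX.2.1⟩

lemma Lplus_mem_Ioo {u : ℝ} {X : OrderBook} (hX : IsConfig a b X) :
    (∀ x ∈ (Lplus a b u X).minus, x ∈ Ioo a b) ∧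
      (∀ x ∈ (Lplus a b u X).plus, x ∈ Ioo a b) := by
  rw [Lplus]
  split_ifs with h1 h2
  · exact ⟨fun x hx => hX.1 x (Multiset.mem_of_mem_erase hx), hX.2.1⟩
  · constructor
    · exact hX.1
    · intro x hx
      rcases Multiset.mem_cons.mp hx with h | h
      · subst h; exact h2
      · exact hX.2.1 x h
  · exact ⟨hX.1, hX.2.1⟩

lemma linF_congr {w1m w1p w2m w2p : ℝ → ℝ}
    (h1 : EqOn w1m w2m (Ioo a b)) (h2 : EqOn w1p w2p (Ioo a b))
    {Y : OrderBook} (hY : (∀ x ∈ Y.minus, x ∈ Ioo a b) ∧ ∀ x ∈ Y.plus, x ∈ Ioo a b) :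
    linF w1m w1p Y = linF w2m w2p Y := by
  rw [linF, linF]
  congr 1
  · congr 1
    exact Multiset.map_congr rfl (fun x hx => h1 (hY.1 x hx))
  · congr 1
    exact Multiset.map_congr rfl (fun x hx => h2 (hY.2 x hx))

lemma genOp_congr {w1m w1p w2m w2p : ℝ → ℝ}
    (h1 : EqOn w1m w2m (Ioo a b)) (h2 : EqOn w1p w2p (Ioo a b))
    {X : OrderBook} (hX : IsConfig a b X) :
    genOp a b μm μp (linF w1m w1p) X = genOp a b μm μp (linF w2m w2p) X := by
  have hXm : (∀ x ∈ X.minus, x ∈ Ioo a b) ∧ ∀ x ∈ X.plus, x ∈ Ioo a b :=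
    ⟨hX.1, hX.2.1⟩
  have e1 : (fun u => linF w1m w1p (Lminus a b u X) - linF w1m w1p X)
      = fun u => linF w2m w2p (Lminus a b u X) - linF w2m w2p X := by
    funext u
    rw [linF_congr h1 h2 (Lminus_mem_Ioo hX), linF_congr h1 h2 hXm]
  have e2 : (fun u => linF w1m w1p (Lplus a b u X) - linF w1m w1p X)
      = fun u => linF w2m w2p (Lplus a b u X) - linF w2m w2p X := by
    funext u
    rw [linF_congr h1 h2 (Lplus_mem_Ioo hX), linF_congr h1 h2 hXm]
  rw [genOp, genOp, e1, e2]

end Identity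

end Stmt7Aux

namespace Stmt7Aux

section FromIdentity

variable {a b : ℝ} {lm lp gm gp : ℝ → ℝ} {μm μp : MeasureTheory.Measure ℝ}

lemma equations_of_identity (hab : a < b) (hA3 : A3 a b lm lp) (hA6 : A6 a b lm lp)
    (hμm : IsMuMinus a b lm μm) (hμp : IsMuPlus a b lp μp)
    {Wm Wp : ℝ → ℝ} {C : ℝ} {c' : ℝ}
    (hWm : Measurable Wm) (hWp : Measurable Wp)
    (hbm : ∀ x, |Wm x| ≤ C) (hbp : ∀ x, |Wp x| ≤ C)
    (hwma : Wm a = 0) (hwpb : Wp b = 0)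
    (hcontm : ContinuousWithinAt Wm (Iio b) b)
    (hcontp : ContinuousWithinAt Wp (Ioi a) a)
    (hgmLb : ContinuousWithinAt gm (Iio b) b)
    (hgpRa : ContinuousWithinAt gp (Ioi a) a)
    (hid : ∀ X : OrderBook, IsConfig a b X →
      genOp a b μm μp (linF Wm Wp) X = gm (Mminus a X) + gp (Mplus b X) - c') :
    (∀ m ∈ Icc a b, Wm m * lp m = gm a - gm m - Jm μp a Wp m) ∧
    (∀ q ∈ Icc a b, Wp q * lm q = gp b - gp q - Jp μm b Wm q) ∧
    c' = gm a + gp b - (∫ x in Ioo a b, Wm x ∂μm) - ∫ x in Ioo a b, Wp x ∂μp := by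
  haveI : IsFiniteMeasure μm := isFiniteMeasure_muM hab.le hμm
  haveI : IsFiniteMeasure μp := isFiniteMeasure_muP hab.le hμp
  set Im : ℝ := ∫ x in Ioo a b, Wm x ∂μm with hIm
  set Ip : ℝ := ∫ x in Ioo a b, Wp x ∂μp with hIp
  -- empty configuration
  have hE0 : Im + Ip = gm a + gp b - c' := by
    have h := hid ⟨0, 0⟩ (config_empty hab)
    rw [genOp_master hab hA3 hμm hμp hWm hWp hbm hbp hwma hwpb
      (config_empty hab)] at h
    rw [Mminus_empty, Mplus_empty] at h
    simp only [Set.Ico_self, Set.Ioc_self, setIntegral_empty, hwma, hwpb] at h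
    rw [← hIm, ← hIp] at h
    linarith
  -- one buy limit order
  have hEm : ∀ m ∈ Ioo a b, Wm m * lp m = gm a - gm m - Jm μp a Wp m := by
    intro m hm
    have hcfg := config_single_minus hm
    have h := hid ⟨{m}, 0⟩ hcfg
    rw [genOp_master hab hA3 hμm hμp hWm hWp hbm hbp hwma hwpb hcfg] at h
    have hMm : Mminus a (⟨{m}, 0⟩ : OrderBook) = m := Mminus_single hm.1.le 0
    have hMp : Mplus b (⟨{m}, 0⟩ : OrderBook) = b := Mplus_of_eq rfl
    rw [hMm, hMp] at h
    simp only [Set.Ico_self, setIntegral_empty, hwpb] at h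
    rw [← hIm, ← hIp] at h
    have e1 : Jm μp a Wp m = ∫ x in Ioc a m, Wp x ∂μp := rfl
    rw [e1]
    linarith
  -- one sell limit order
  have hEp : ∀ q ∈ Ioo a b, Wp q * lm q = gp b - gp q - Jp μm b Wm q := by
    intro q hq
    have hcfg := config_single_plus hq
    have h := hid ⟨0, {q}⟩ hcfg
    rw [genOp_master hab hA3 hμm hμp hWm hWp hbm hbp hwma hwpb hcfg] at h
    have hMm : Mminus a (⟨0, {q}⟩ : OrderBook) = a := Mminus_of_eq rfl
    have hMp : Mplus b (⟨0, {q}⟩ : OrderBook) = q := Mplus_single hq.2.le 0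
    rw [hMm, hMp] at h
    simp only [Set.Ioc_self, setIntegral_empty, hwma] at h
    rw [← hIm, ← hIp] at h
    have e1 : Jp μm b Wm q = ∫ x in Ico q b, Wm x ∂μm := rfl
    rw [e1]
    linarith
  -- membership of Ioo in the one-sided neighbourhood filters
  have hmemb : Ioo a b ∈ 𝓝[Iio b] b := by
    rw [← Set.Ioi_inter_Iio]
    exact Filter.inter_mem (mem_nhdsWithin_of_mem_nhds (Ioi_mem_nhds hab))
      self_mem_nhdsWithin
  have hmema : Ioo a b ∈ 𝓝[Ioi a] a := by
    rw [← Set.Ioi_inter_Iio]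
    exact Filter.inter_mem self_mem_nhdsWithin
      (mem_nhdsWithin_of_mem_nhds (Iio_mem_nhds hab))
  -- the equation extends to m = b by left continuity
  have hEq1b : Wm b * lp b = gm a - gm b - Jm μp a Wp b := by
    have hlp : Tendsto lp (𝓝[Iio b] b) (𝓝 (lp b)) := by
      have h1 : Tendsto (fun y => lp (clf a b y)) (𝓝[Iio b] b)
          (𝓝 (lp (clf a b b))) :=
        ((continuous_lp_clf hab.le hA3).tendsto b).mono_left nhdsWithin_le_nhds
      rw [clf_of_mem ⟨hab.le, le_rfl⟩] at h1
      refine h1.congr' ?_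
      filter_upwards [hmemb] with y hy
      rw [clf_of_mem ⟨hy.1.le, hy.2.le⟩]
    have hJ : Tendsto (fun m => Jm μp a Wp m) (𝓝[Iio b] b) (𝓝 (Jm μp a Wp b)) := by
      have h1 := Jm_clf_leftCont (w := Wp) hab hA3 hμp hWp hbp
        ((abs_nonneg _).trans (hbp 0)) (x := b) ⟨hab, le_rfl⟩
      rw [ContinuousWithinAt, clf_of_mem ⟨hab.le, le_rfl⟩] at h1
      refine h1.congr' ?_
      filter_upwards [hmemb] with y hy
      rw [clf_of_mem ⟨hy.1.le, hy.2.le⟩]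
    have hF1 : Tendsto (fun m => Wm m * lp m) (𝓝[Iio b] b)
        (𝓝 (Wm b * lp b)) := hcontm.mul hlp
    have hF2 : Tendsto (fun m => gm a - gm m - Jm μp a Wp m) (𝓝[Iio b] b)
        (𝓝 (gm a - gm b - Jm μp a Wp b)) :=
      (tendsto_const_nhds.sub hgmLb).sub hJ
    have hev : (fun m => Wm m * lp m)
        =ᶠ[𝓝[Iio b] b] fun m => gm a - gm m - Jm μp a Wp m := by
      filter_upwards [hmemb] with y hy
      exact hEm y hy
    exact tendsto_nhds_unique hF1 (hF2.congr' hev.symm)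
  -- the equation extends to q = a by right continuity
  have hEq2a : Wp a * lm a = gp b - gp a - Jp μm b Wm a := by
    have hlm : Tendsto lm (𝓝[Ioi a] a) (𝓝 (lm a)) := by
      have h1 : Tendsto (fun y => lm (clf a b y)) (𝓝[Ioi a] a)
          (𝓝 (lm (clf a b a))) :=
        ((continuous_lm_clf hab.le hA3).tendsto a).mono_left nhdsWithin_le_nhds
      rw [clf_of_mem ⟨le_rfl, hab.le⟩] at h1
      refine h1.congr' ?_
      filter_upwards [hmema] with y hy
      rw [clf_of_mem ⟨hy.1.le, hy.2.le⟩]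
    have hJ : Tendsto (fun q => Jp μm b Wm q) (𝓝[Ioi a] a) (𝓝 (Jp μm b Wm a)) := by
      have h1 := Jp_clf_rightCont (w := Wm) hab hA3 hμm hWm hbm
        ((abs_nonneg _).trans (hbm 0)) (x := a) ⟨le_rfl, hab⟩
      rw [ContinuousWithinAt, clf_of_mem ⟨le_rfl, hab.le⟩] at h1
      refine h1.congr' ?_
      filter_upwards [hmema] with y hy
      rw [clf_of_mem ⟨hy.1.le, hy.2.le⟩]
    have hF1 : Tendsto (fun q => Wp q * lm q) (𝓝[Ioi a] a)
        (𝓝 (Wp a * lm a)) := hcontp.mul hlm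
    have hF2 : Tendsto (fun q => gp b - gp q - Jp μm b Wm q) (𝓝[Ioi a] a)
        (𝓝 (gp b - gp a - Jp μm b Wm a)) :=
      (tendsto_const_nhds.sub hgpRa).sub hJ
    have hev : (fun q => Wp q * lm q)
        =ᶠ[𝓝[Ioi a] a] fun q => gp b - gp q - Jp μm b Wm q := by
      filter_upwards [hmema] with y hy
      exact hEp y hy
    exact tendsto_nhds_unique hF1 (hF2.congr' hev.symm)
  refine ⟨?_, ?_, by linarith⟩
  · intro m hm
    rcases eq_or_lt_of_le hm.1 with h | h
    · subst h
      rw [hwma, zero_mul, Jm]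
      simp
    · rcases eq_or_lt_of_le hm.2 with h2 | h2
      · subst h2; exact hEq1b
      · exact hEm m ⟨h, h2⟩
  · intro q hq
    rcases eq_or_lt_of_le hq.2 with h | h
    · rw [h, hwpb, zero_mul, Jp]
      simp
    · rcases eq_or_lt_of_le hq.1 with h2 | h2
      · rw [← h2]; exact hEq2a
      · exact hEp q ⟨h2, h⟩

end FromIdentity

end Stmt7Aux

namespace Stmt7Aux

section Uniqueness

variable {a b : ℝ} {lm lp gm gp : ℝ → ℝ} {μm μp : MeasureTheory.Measure ℝ}

lemma contraction_bound {v L La Lb K : ℝ} (hL : 0 < L) (hLa : 0 < La)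
    (hLb : 0 < Lb) (hLaL : La ≤ L) (hLLb : L ≤ Lb) (hK : 0 ≤ K)
    (hkey : v * L ≤ K * (L - La)) : v ≤ (1 - La / Lb) * K := by
  have h1 : v ≤ K * (L - La) / L := (le_div_iff₀ hL).mpr hkey
  have h2 : K * (L - La) / L = K - K * (La / L) := by field_simp
  have h3 : K * (La / Lb) ≤ K * (La / L) := by gcongr
  have h4 : (1 - La / Lb) * K = K - K * (La / Lb) := by ring
  linarith

lemma contraction_bound' {v L La Lb K : ℝ} (hL : 0 < L) (hLb : 0 < Lb)
    (hLa : 0 < La) (hLbL : Lb ≤ L) (hLLa : L ≤ La) (hK : 0 ≤ K)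
    (hkey : v * L ≤ K * (L - Lb)) : v ≤ (1 - Lb / La) * K := by
  have h1 : v ≤ K * (L - Lb) / L := (le_div_iff₀ hL).mpr hkey
  have h2 : K * (L - Lb) / L = K - K * (Lb / L) := by field_simp
  have h3 : K * (Lb / La) ≤ K * (Lb / L) := by gcongr
  have h4 : (1 - Lb / La) * K = K - K * (Lb / La) := by ring
  linarith

lemma solutions_unique (hab : a < b) (hA3 : A3 a b lm lp) (hA6 : A6 a b lm lp)
    (hμm : IsMuMinus a b lm μm) (hμp : IsMuPlus a b lp μp)
    {W1m W1p W2m W2p : ℝ → ℝ} {C1 C2 : ℝ}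
    (h1m : Measurable W1m) (h1p : Measurable W1p)
    (h2m : Measurable W2m) (h2p : Measurable W2p)
    (hb1m : ∀ x, |W1m x| ≤ C1) (hb1p : ∀ x, |W1p x| ≤ C1)
    (hb2m : ∀ x, |W2m x| ≤ C2) (hb2p : ∀ x, |W2p x| ≤ C2)
    (hEq11 : ∀ m ∈ Icc a b, W1m m * lp m = gm a - gm m - Jm μp a W1p m)
    (hEq12 : ∀ q ∈ Icc a b, W1p q * lm q = gp b - gp q - Jp μm b W1m q)
    (hEq21 : ∀ m ∈ Icc a b, W2m m * lp m = gm a - gm m - Jm μp a W2p m)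
    (hEq22 : ∀ q ∈ Icc a b, W2p q * lm q = gp b - gp q - Jp μm b W2m q) :
    EqOn W1m W2m (Icc a b) ∧ EqOn W1p W2p (Icc a b) := by
  haveI : IsFiniteMeasure μm := isFiniteMeasure_muM hab.le hμm
  haveI : IsFiniteMeasure μp := isFiniteMeasure_muP hab.le hμp
  have hlpa : 0 < lp a := hA6.1
  have hlpb : 0 < lp b := lp_pos hA3 hA6 ⟨hab.le, le_rfl⟩
  have hlma : 0 < lm a := lm_pos hA3 hA6 ⟨le_rfl, hab.le⟩
  have hlmb : 0 < lm b := hA6.2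
  set d : ℝ → ℝ := fun x => W1m x - W2m x with hd
  set e : ℝ → ℝ := fun x => W1p x - W2p x with he
  have hd_eq : ∀ m ∈ Icc a b, d m * lp m = -(∫ x in Ioc a m, e x ∂μp) := by
    intro m hm
    have h1 := hEq11 m hm
    have h2 := hEq21 m hm
    have h3 := Jm_sub (μp := μp) (a := a) h1p h2p hb1p hb2p m
    show (W1m m - W2m m) * lp m = -(∫ x in Ioc a m, (W1p x - W2p x) ∂μp)
    rw [sub_mul]
    linarith
  have he_eq : ∀ q ∈ Icc a b, e q * lm q = -(∫ x in Ico q b, d x ∂μm) := by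
    intro q hq
    have h1 := hEq12 q hq
    have h2 := hEq22 q hq
    have h3 := Jp_sub (μm := μm) (b := b) h1m h2m hb1m hb2m q
    show (W1p q - W2p q) * lm q = -(∫ x in Ico q b, (W1m x - W2m x) ∂μm)
    rw [sub_mul]
    linarith
  haveI : Nonempty (Icc a b) := ⟨⟨a, le_rfl, hab.le⟩⟩
  set M : ℝ := ⨆ x : Icc a b, |d ↑x| with hM
  have hbdd : BddAbove (range fun x : Icc a b => |d ↑x|) := by
    refine ⟨C1 + C2, ?_⟩
    rintro y ⟨x, rfl⟩
    calc |d ↑x| ≤ |W1m ↑x| + |W2m ↑x| := abs_sub _ _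
      _ ≤ C1 + C2 := add_le_add (hb1m _) (hb2m _)
  have hMle : ∀ x ∈ Icc a b, |d x| ≤ M := fun x hx =>
    le_ciSup hbdd (⟨x, hx⟩ : Icc a b)
  have hM0 : 0 ≤ M := (abs_nonneg _).trans (hMle a ⟨le_rfl, hab.le⟩)
  set ρ1 : ℝ := 1 - lp a / lp b with hρ1def
  set ρ2 : ℝ := 1 - lm b / lm a with hρ2def
  -- step 1 : |e| ≤ ρ2 * M on Icc
  have step1 : ∀ q ∈ Icc a b, |e q| ≤ ρ2 * M := by
    intro q hq
    have hlmq : 0 < lm q := lm_pos hA3 hA6 hq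
    have hlmqa : lm q ≤ lm a := hA3.2.2.1 ⟨le_rfl, hab.le⟩ hq hq.1
    have hlmbq : lm b ≤ lm q := hA3.2.2.1 hq ⟨hab.le, le_rfl⟩ hq.2
    have hInt : |∫ x in Ico q b, d x ∂μm| ≤ M * (lm q - lm b) := by
      have hbound := norm_setIntegral_le_of_norm_le_const (μ := μm)
        (s := Ico q b) (f := d) (C := M) (measure_lt_top μm _)
        (fun x hx => by
          rw [Real.norm_eq_abs]
          exact hMle x ⟨hq.1.trans hx.1, hx.2.le⟩)
      rw [Real.norm_eq_abs, measureReal_def] at hbound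
      refine hbound.trans ?_
      rw [muM_Ico hμm hq.1 hq.2 le_rfl hlmbq hlmb.le,
        ENNReal.toReal_ofReal (by linarith)]
    have hkey : |e q| * lm q ≤ M * (lm q - lm b) := by
      have := he_eq q hq
      calc |e q| * lm q = |e q * lm q| := by
            rw [abs_mul, abs_of_pos hlmq]
        _ = |∫ x in Ico q b, d x ∂μm| := by rw [this, abs_neg]
        _ ≤ M * (lm q - lm b) := hInt
    have := contraction_bound' hlmq hlmb hlma hlmbq hlmqa hM0 hkey
    rw [hρ2def]
    exact this
  -- step 2 : |d| ≤ ρ1 * (ρ2 * M) on Icc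
  have step2 : ∀ m ∈ Icc a b, |d m| ≤ ρ1 * (ρ2 * M) := by
    intro m hm
    have hlpm : 0 < lp m := lp_pos hA3 hA6 hm
    have hlpmb : lp m ≤ lp b := hA3.2.2.2.1 hm ⟨hab.le, le_rfl⟩ hm.2
    have hlpam : lp a ≤ lp m := hA3.2.2.2.1 ⟨le_rfl, hab.le⟩ hm hm.1
    have hInt : |∫ x in Ioc a m, e x ∂μp| ≤ ρ2 * M * (lp m - lp a) := by
      have hbound := norm_setIntegral_le_of_norm_le_const (μ := μp)
        (s := Ioc a m) (f := e) (C := ρ2 * M) (measure_lt_top μp _)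
        (fun x hx => by
          rw [Real.norm_eq_abs]
          exact step1 x ⟨hx.1.le, hx.2.trans hm.2⟩)
      rw [Real.norm_eq_abs, measureReal_def] at hbound
      refine hbound.trans ?_
      rw [muP_Ioc hμp le_rfl hm.1 hm.2 hlpam hlpa.le,
        ENNReal.toReal_ofReal (by linarith)]
    have hkey : |d m| * lp m ≤ ρ2 * M * (lp m - lp a) := by
      have := hd_eq m hm
      calc |d m| * lp m = |d m * lp m| := by
            rw [abs_mul, abs_of_pos hlpm]
        _ = |∫ x in Ioc a m, e x ∂μp| := by rw [this, abs_neg]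
        _ ≤ ρ2 * M * (lp m - lp a) := hInt
    have hρ2M : 0 ≤ ρ2 * M := by
      have : 0 ≤ ρ2 := by
        rw [hρ2def, sub_nonneg, div_le_one hlma]
        exact hA3.2.2.1 ⟨le_rfl, hab.le⟩ ⟨hab.le, le_rfl⟩ hab.le
      exact mul_nonneg this hM0
    have := contraction_bound hlpm hlpa hlpb hlpam hlpmb hρ2M hkey
    rw [hρ1def]
    exact this
  -- conclude M = 0
  have hMle2 : M ≤ ρ1 * ρ2 * M := by
    have := ciSup_le (fun x : Icc a b => step2 ↑x x.2)
    rw [← hM] at this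
    calc M ≤ ρ1 * (ρ2 * M) := this
      _ = ρ1 * ρ2 * M := by ring
  have hρ11 : ρ1 < 1 := by
    rw [hρ1def]
    have : 0 < lp a / lp b := div_pos hlpa hlpb
    linarith
  have hρ10 : 0 ≤ ρ1 := by
    rw [hρ1def, sub_nonneg, div_le_one hlpb]
    exact hA3.2.2.2.1 ⟨le_rfl, hab.le⟩ ⟨hab.le, le_rfl⟩ hab.le
  have hρ21 : ρ2 < 1 := by
    rw [hρ2def]
    have : 0 < lm b / lm a := div_pos hlmb hlma
    linarith
  have hρ20 : 0 ≤ ρ2 := by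
    rw [hρ2def, sub_nonneg, div_le_one hlma]
    exact hA3.2.2.1 ⟨le_rfl, hab.le⟩ ⟨hab.le, le_rfl⟩ hab.le
  have hρρ : ρ1 * ρ2 < 1 := by nlinarith
  have hMzero : M = 0 := by
    by_contra hne
    have hMpos : 0 < M := lt_of_le_of_ne hM0 (Ne.symm hne)
    have := mul_lt_mul_of_pos_right hρρ hMpos
    rw [one_mul] at this
    linarith
  constructor
  · intro x hx
    have := hMle x hx
    rw [hMzero] at this
    have : d x = 0 := abs_eq_zero.mp (le_antisymm this (abs_nonneg _))
    exact sub_eq_zero.mp this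
  · intro x hx
    have := step1 x hx
    rw [hMzero, mul_zero] at this
    have : e x = 0 := abs_eq_zero.mp (le_antisymm this (abs_nonneg _))
    exact sub_eq_zero.mp this

end Uniqueness

end Stmt7Aux


open Stmt7Aux in
/-- inverse problem: under (A3) and (A6), for every pair `(gm, gp)` of
bounded functions of bounded variation (`gm` left-continuous, `gp` right-continuous)
there exist an admissible pair of weight functions `(wm, wp)` and a constant `c`,
unique (the weight functions as functions on `[a,b]`), such that the associated linear
functional `F = linF wm wp` satisfies `GF(X) = gm(M₋(X)) + gp(M₊(X)) − c` for every
configuration `X`. -/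
theorem stmt7 (a b : ℝ) (hab : a < b) (lm lp : ℝ → ℝ)
    (hA3 : A3 a b lm lp) (hA6 : A6 a b lm lp)
    (μm μp : MeasureTheory.Measure ℝ)
    (hμm : IsMuMinus a b lm μm) (hμp : IsMuPlus a b lp μp)
    (gm gp : ℝ → ℝ)
    (hgmB : ∃ C, ∀ x ∈ Set.Icc a b, |gm x| ≤ C)
    (hgpB : ∃ C, ∀ x ∈ Set.Icc a b, |gp x| ≤ C)
    (hgmBV : BoundedVariationOn gm (Set.Icc a b))
    (hgpBV : BoundedVariationOn gp (Set.Icc a b))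
    (hgmL : ∀ x ∈ Set.Ioc a b, ContinuousWithinAt gm (Set.Iio x) x)
    (hgpR : ∀ x ∈ Set.Ico a b, ContinuousWithinAt gp (Set.Ioi x) x) :
    ∃ wm wp : ℝ → ℝ, ∃ c : ℝ,
      (WPair a b wm wp ∧
        ∀ X : OrderBook, IsConfig a b X →
          genOp a b μm μp (linF wm wp) X = gm (Mminus a X) + gp (Mplus b X) - c) ∧
      ∀ wm' wp' : ℝ → ℝ, ∀ c' : ℝ,
        (WPair a b wm' wp' ∧
          ∀ X : OrderBook, IsConfig a b X →
            genOp a b μm μp (linF wm' wp') X = gm (Mminus a X) + gp (Mplus b X) - c') →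
        Set.EqOn wm' wm (Set.Icc a b) ∧ Set.EqOn wp' wp (Set.Icc a b) ∧ c' = c := by
  haveI : IsFiniteMeasure μm := isFiniteMeasure_muM hab.le hμm
  haveI : IsFiniteMeasure μp := isFiniteMeasure_muP hab.le hμp
  obtain ⟨Cgm, hCgm⟩ := hgmB
  obtain ⟨Cgp, hCgp⟩ := hgpB
  obtain ⟨wm, wp, hwmM, hwpM, ⟨C, hbm, hbp⟩, hwmPhi, hwpPsi⟩ :=
    exists_solution hab hA3 hA6 hμm hμp hCgm hCgp hgmBV hgpBV
  have hwma : wm a = 0 := by rw [hwmPhi]; exact Phi_at_a hab wp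
  have hwpb : wp b = 0 := by rw [hwpPsi]; exact Psi_at_b hab wm
  have hEq1 : ∀ m ∈ Set.Icc a b, wm m * lp m = gm a - gm m - Jm μp a wp m := by
    intro m hm
    conv_lhs => rw [hwmPhi]
    exact Phi_eq hA3 hA6 wp hm
  have hEq2 : ∀ q ∈ Set.Icc a b, wp q * lm q = gp b - gp q - Jp μm b wm q := by
    intro q hq
    conv_lhs => rw [hwpPsi]
    exact Psi_eq hA3 hA6 wm hq
  refine ⟨wm, wp,
    gm a + gp b - (∫ x in Set.Ioo a b, wm x ∂μm) - ∫ x in Set.Ioo a b, wp x ∂μp,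
    ⟨⟨?_, ?_⟩, ?_⟩⟩
  · -- WPair and the identity
    refine ⟨⟨C, fun x _ => hbm x⟩, ⟨C, fun x _ => hbp x⟩, ?_, ?_, ?_, ?_, hwma, hwpb⟩
    · rw [hwmPhi]
      exact bvOn_Phi hab hA3 hA6 hwpM hbp hCgm hgmBV
    · rw [hwpPsi]
      exact bvOn_Psi hab hA3 hA6 hwmM hbm hCgp hgpBV
    · intro x hx
      rw [hwmPhi]
      exact Phi_leftCont hab hA3 hA6 hμp hwpM hbp hgmL hx
    · intro x hx
      rw [hwpPsi]
      exact Psi_rightCont hab hA3 hA6 hμm hwmM hbm hgpR hx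
  · intro X hX
    exact genOp_identity hab hA3 hμm hμp hwmM hwpM hbm hbp hwma hwpb hEq1 hEq2 hX
  · -- uniqueness
    rintro wm' wp' c' ⟨⟨⟨C1, hb1⟩, ⟨C2, hb2⟩, hBV1, hBV2, hcont1, hcont2, hw'a, hw'b⟩, hid'⟩
    set Wm' : ℝ → ℝ := fun x => wm' (clf a b x) with hWm'def
    set Wp' : ℝ → ℝ := fun x => wp' (clf a b x) with hWp'def
    have hWm'meas : Measurable Wm' := measurable_comp_clf hab.le hBV1
    have hWp'meas : Measurable Wp' := measurable_comp_clf hab.le hBV2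
    have hEqOn1 : Set.EqOn wm' Wm' (Set.Icc a b) := by
      intro x hx
      show wm' x = wm' (clf a b x)
      rw [clf_of_mem hx]
    have hEqOn2 : Set.EqOn wp' Wp' (Set.Icc a b) := by
      intro x hx
      show wp' x = wp' (clf a b x)
      rw [clf_of_mem hx]
    set C' : ℝ := max C1 C2 with hC'def
    have hbW'm : ∀ x, |Wm' x| ≤ C' :=
      fun x => (hb1 _ (clf_mem hab.le x)).trans (le_max_left _ _)
    have hbW'p : ∀ x, |Wp' x| ≤ C' :=
      fun x => (hb2 _ (clf_mem hab.le x)).trans (le_max_right _ _)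
    have hW'a : Wm' a = 0 := by
      show wm' (clf a b a) = 0
      rw [clf_of_mem ⟨le_rfl, hab.le⟩, hw'a]
    have hW'b : Wp' b = 0 := by
      show wp' (clf a b b) = 0
      rw [clf_of_mem ⟨hab.le, le_rfl⟩, hw'b]
    have hcontm' : ContinuousWithinAt Wm' (Set.Iio b) b := by
      have := ContinuousWithinAt.comp (f := clf a b) (g := wm')
        (by rw [clf_of_mem ⟨hab.le, le_rfl⟩]; exact hcont1 b ⟨hab, le_rfl⟩)
        ((clf_cont a b).continuousWithinAt) (clf_mapsTo_Iio hab)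
      exact this
    have hcontp' : ContinuousWithinAt Wp' (Set.Ioi a) a := by
      have := ContinuousWithinAt.comp (f := clf a b) (g := wp')
        (by rw [clf_of_mem ⟨le_rfl, hab.le⟩]; exact hcont2 a ⟨le_rfl, hab⟩)
        ((clf_cont a b).continuousWithinAt) (clf_mapsTo_Ioi hab)
      exact this
    have hid'' : ∀ X : OrderBook, IsConfig a b X →
        genOp a b μm μp (linF Wm' Wp') X = gm (Mminus a X) + gp (Mplus b X) - c' := by
      intro X hX
      rw [genOp_congr (fun x hx => (hEqOn1 (Set.Ioo_subset_Icc_self hx)).symm)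
        (fun x hx => (hEqOn2 (Set.Ioo_subset_Icc_self hx)).symm) hX]
      exact hid' X hX
    obtain ⟨hE1', hE2', hc'⟩ := equations_of_identity hab hA3 hA6 hμm hμp
      hWm'meas hWp'meas hbW'm hbW'p hW'a hW'b hcontm' hcontp'
      (hgmL b ⟨hab, le_rfl⟩) (hgpR a ⟨le_rfl, hab⟩) hid''
    obtain ⟨hEqm, hEqp⟩ := solutions_unique hab hA3 hA6 hμm hμp
      hWm'meas hWp'meas hwmM hwpM hbW'm hbW'p hbm hbp hE1' hE2' hEq1 hEq2
    have hInt1 : (∫ x in Set.Ioo a b, Wm' x ∂μm) = ∫ x in Set.Ioo a b, wm x ∂μm :=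
      setIntegral_congr_fun measurableSet_Ioo
        (fun x hx => hEqm (Set.Ioo_subset_Icc_self hx))
    have hInt2 : (∫ x in Set.Ioo a b, Wp' x ∂μp) = ∫ x in Set.Ioo a b, wp x ∂μp :=
      setIntegral_congr_fun measurableSet_Ioo
        (fun x hx => hEqp (Set.Ioo_subset_Icc_self hx))
    refine ⟨fun x hx => (hEqOn1 hx).trans (hEqm hx),
      fun x hx => (hEqOn2 hx).trans (hEqp hx), ?_⟩
    rw [hc', hInt1, hInt2]
end
end
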